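/- arXiv:2409.10037 — 4 statements merged into one kernel-verified Lean document; each statement's English description precedes it below -/
import Mathlib

section
/- Let d ≥ 1 and let α, β be nonpositive real numbers with α > -d, β > -d and α + β < -d. Then there is a constant C such that for all k ∈ ℤ^d, the sum over ℓ ∈ ℤ^d of ⟨ℓ⟩^α ⟨k-ℓ⟩^β is at most C ⟨k⟩^{d+α+β}, where ⟨x⟩ = (1+|x|²)^{1/2}. -/
/-- The Japanese bracket `⟨x⟩ = (1 + |x|²)^{1/2}` of a lattice point `x ∈ ℤ^d`. -/
noncomputable def jbracket {d : ℕ} (l : Fin d → ℤ) : ℝ :=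
  (1 + ∑ r, ((l r : ℝ)) ^ 2) ^ ((1 : ℝ) / 2)

namespace DCEaux

variable {d : ℕ}

lemma sq_sum_nonneg (l : Fin d → ℤ) : (0:ℝ) ≤ ∑ r, ((l r : ℝ))^2 :=
  Finset.sum_nonneg fun _ _ => sq_nonneg _

lemma jb_sqrt (l : Fin d → ℤ) : jbracket l = Real.sqrt (1 + ∑ r, ((l r : ℝ))^2) := by
  rw [jbracket, Real.sqrt_eq_rpow]

lemma one_le_jb (l : Fin d → ℤ) : 1 ≤ jbracket l := by
  rw [jb_sqrt]
  calc (1:ℝ) = Real.sqrt 1 := Real.sqrt_one.symm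
    _ ≤ _ := Real.sqrt_le_sqrt (by linarith [sq_sum_nonneg l])

lemma jb_pos (l : Fin d → ℤ) : 0 < jbracket l := lt_of_lt_of_le one_pos (one_le_jb l)

lemma abs_coord_le (l : Fin d → ℤ) (i : Fin d) : |(l i : ℝ)| ≤ jbracket l := by
  rw [jb_sqrt, ← Real.sqrt_sq_eq_abs]
  apply Real.sqrt_le_sqrt
  have := Finset.single_le_sum (f := fun r => ((l r : ℝ))^2)
    (fun r _ => sq_nonneg _) (Finset.mem_univ i)
  linarith

lemma jb_triangle (a b : Fin d → ℤ) : jbracket (a + b) ≤ jbracket a + jbracket b := by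
  classical
  set u : EuclideanSpace ℝ (Fin (d+1)) := WithLp.toLp 2 (Fin.cons 1 (fun i => (a i : ℝ)) : Fin (d+1) → ℝ) with hu
  set v : EuclideanSpace ℝ (Fin (d+1)) := WithLp.toLp 2 (Fin.cons 0 (fun i => (b i : ℝ)) : Fin (d+1) → ℝ) with hv
  have hnu : ‖u‖ = jbracket a := by
    rw [EuclideanSpace.norm_eq, jb_sqrt]
    congr 1
    rw [Fin.sum_univ_succ]
    simp [hu, Real.norm_eq_abs, sq_abs]
  have hnv : ‖v‖ ≤ jbracket b := by
    rw [EuclideanSpace.norm_eq, jb_sqrt]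
    apply Real.sqrt_le_sqrt
    rw [Fin.sum_univ_succ]
    simp [hv, Real.norm_eq_abs, sq_abs]
  have huv : jbracket (a+b) = ‖u + v‖ := by
    rw [EuclideanSpace.norm_eq, jb_sqrt]
    congr 1
    rw [Fin.sum_univ_succ]
    simp [hu, hv, Real.norm_eq_abs, sq_abs]
  calc jbracket (a+b) = ‖u + v‖ := huv
    _ ≤ ‖u‖ + ‖v‖ := norm_add_le u v
    _ ≤ jbracket a + jbracket b := by rw [hnu]; linarith

lemma jb_peetre (k l : Fin d → ℤ) : jbracket k ≤ jbracket l + jbracket (k - l) := by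
  have := jb_triangle l (k - l)
  rwa [show l + (k - l) = k by ring] at this


/-- dyadic scale of a lattice point -/
noncomputable def dyad (l : Fin d → ℤ) : ℕ := (⌊Real.logb 2 (jbracket l)⌋).toNat

lemma dyad_spec (l : Fin d → ℤ) :
    (2:ℝ)^(dyad l) ≤ jbracket l ∧ jbracket l < 2^(dyad l + 1) := by
  have h1 := one_le_jb l
  have hpos := jb_pos l
  have hlb : 0 ≤ Real.logb 2 (jbracket l) := Real.logb_nonneg one_lt_two h1
  have hfl : (0:ℤ) ≤ ⌊Real.logb 2 (jbracket l)⌋ := Int.le_floor.2 (by exact_mod_cast hlb)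
  have hcast : ((dyad l : ℕ) : ℝ) = ((⌊Real.logb 2 (jbracket l)⌋ : ℤ) : ℝ) := by
    rw [dyad]
    exact_mod_cast congrArg (fun z : ℤ => (z : ℝ)) (Int.toNat_of_nonneg hfl)
  have hle : ((dyad l : ℕ) : ℝ) ≤ Real.logb 2 (jbracket l) := by
    rw [hcast]; exact Int.floor_le _
  have hlt : Real.logb 2 (jbracket l) < (dyad l : ℝ) + 1 := by
    rw [hcast]; exact Int.lt_floor_add_one _
  constructor
  · calc (2:ℝ)^(dyad l) = (2:ℝ)^((dyad l : ℕ) : ℝ) := (Real.rpow_natCast 2 _).symm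
      _ ≤ (2:ℝ)^(Real.logb 2 (jbracket l)) := Real.rpow_le_rpow_of_exponent_le one_le_two hle
      _ = jbracket l := Real.rpow_logb two_pos (by norm_num) hpos
  · calc jbracket l = (2:ℝ)^(Real.logb 2 (jbracket l)) :=
        (Real.rpow_logb two_pos (by norm_num) hpos).symm
      _ < (2:ℝ)^(((dyad l : ℝ)) + 1) := Real.rpow_lt_rpow_of_exponent_lt one_lt_two hlt
      _ = 2^(dyad l + 1) := by
        rw [show ((dyad l : ℝ)) + 1 = (((dyad l + 1 : ℕ)) : ℝ) by push_cast; ring,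
          Real.rpow_natCast]

lemma card_le_of_jb_lt (F : Finset (Fin d → ℤ)) (m : ℕ)
    (hF : ∀ l ∈ F, jbracket l < 2^(m+1)) : (F.card : ℝ) ≤ ((2:ℝ)^(m+3))^d := by
  classical
  have hsub : F ⊆ Fintype.piFinset (fun _ : Fin d => Finset.Icc (-(2^(m+1) : ℤ)) (2^(m+1))) := by
    intro l hl
    rw [Fintype.mem_piFinset]
    intro i
    have h1 : |(l i : ℝ)| ≤ jbracket l := abs_coord_le l i
    have h2 : |(l i : ℝ)| < ((2^(m+1) : ℤ) : ℝ) := by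
      push_cast
      exact lt_of_le_of_lt h1 (by exact_mod_cast hF l hl)
    have : |l i| ≤ 2^(m+1) := by
      have : ((|l i| : ℤ) : ℝ) < ((2^(m+1) : ℤ) : ℝ) := by rwa [Int.cast_abs]
      exact le_of_lt (by exact_mod_cast this)
    rw [Finset.mem_Icc]
    exact abs_le.1 this
  have hcard := Finset.card_le_card hsub
  have hpi : (Fintype.piFinset (fun _ : Fin d => Finset.Icc (-(2^(m+1) : ℤ)) (2^(m+1)))).card
      = (2^(m+2)+1)^d := by
    rw [Fintype.card_piFinset]
    have h1 : (Finset.Icc (-(2^(m+1) : ℤ)) (2^(m+1))).card = 2^(m+2)+1 := by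
      rw [Int.card_Icc]
      have h2 : (2^(m+1) : ℤ) + 1 - -(2^(m+1)) = ((2^(m+2)+1 : ℕ) : ℤ) := by push_cast; ring
      rw [h2, Int.toNat_natCast]
    simp [h1]
  calc (F.card : ℝ) ≤ (((2^(m+2)+1)^d : ℕ) : ℝ) := by
        exact_mod_cast hcard.trans_eq hpi
    _ ≤ ((2:ℝ)^(m+3))^d := by
        push_cast
        apply pow_le_pow_left₀ (by positivity)
        have h3 : (1:ℝ) ≤ 2^(m+2) := one_le_pow₀ (by norm_num)
        have h4 : (2:ℝ)^(m+3) = 2^(m+2) + 2^(m+2) := by ring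
        linarith

lemma shell_sum_le (t : ℝ) (ht : t ≤ 0) (j : ℕ) (F : Finset (Fin d → ℤ))
    (hF : ∀ l ∈ F, (2:ℝ)^j ≤ jbracket l ∧ jbracket l < 2^(j+1)) :
    ∑ l ∈ F, jbracket l ^ t ≤ (8:ℝ)^d * ((2:ℝ)^((d:ℝ)+t))^j := by
  have hterm : ∀ l ∈ F, jbracket l ^ t ≤ ((2:ℝ)^j) ^ t := fun l hl =>
    Real.rpow_le_rpow_of_nonpos (by positivity) (hF l hl).1 ht
  have h1 : ∑ l ∈ F, jbracket l ^ t ≤ (F.card : ℝ) * ((2:ℝ)^j) ^ t := by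
    calc ∑ l ∈ F, jbracket l ^ t ≤ ∑ _l ∈ F, ((2:ℝ)^j) ^ t := Finset.sum_le_sum hterm
      _ = (F.card : ℝ) * ((2:ℝ)^j) ^ t := by rw [Finset.sum_const, nsmul_eq_mul]
  have h2 : (F.card : ℝ) ≤ ((2:ℝ)^(j+3))^d := card_le_of_jb_lt F j (fun l hl => (hF l hl).2)
  have h3 : ((2:ℝ)^(j+3))^d * ((2:ℝ)^j) ^ t = (8:ℝ)^d * ((2:ℝ)^((d:ℝ)+t))^j := by
    have e1 : ((2:ℝ)^((d:ℝ)+t))^j = ((2:ℝ)^j) ^ ((d:ℝ)+t) := by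
      rw [← Real.rpow_natCast ((2:ℝ)^((d:ℝ)+t)) j, ← Real.rpow_natCast 2 j,
        ← Real.rpow_mul (by norm_num), ← Real.rpow_mul (by norm_num), mul_comm]
    have e2 : ((2:ℝ)^j) ^ ((d:ℝ)+t) = ((2:ℝ)^j)^(d:ℕ) * ((2:ℝ)^j) ^ t := by
      rw [Real.rpow_add (by positivity), Real.rpow_natCast]
    have e3 : ((2:ℝ)^(j+3))^d = (8:ℝ)^d * ((2:ℝ)^j)^(d:ℕ) := by
      rw [← mul_pow]
      congr 1
      ring
    rw [e1, e2, e3]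
    ring
  calc ∑ l ∈ F, jbracket l ^ t ≤ (F.card : ℝ) * ((2:ℝ)^j) ^ t := h1
    _ ≤ ((2:ℝ)^(j+3))^d * ((2:ℝ)^j) ^ t := by
        apply mul_le_mul_of_nonneg_right h2 (Real.rpow_nonneg (by positivity) t)
    _ = (8:ℝ)^d * ((2:ℝ)^((d:ℝ)+t))^j := h3


lemma geom_range_le {r : ℝ} (h1 : 1 < r) (J : ℕ) :
    ∑ j ∈ Finset.range J, r^j ≤ r^J / (r - 1) := by
  rw [geom_sum_eq h1.ne' J]
  have h2 : (0:ℝ) < r - 1 := by linarith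
  gcongr
  linarith

lemma geom_Icc_le {r : ℝ} (h0 : 0 ≤ r) (h1 : r < 1) (a M : ℕ) :
    ∑ j ∈ Finset.Icc a M, r^j ≤ r^a / (1 - r) := by
  rw [← Finset.Ico_add_one_right_eq_Icc, Finset.sum_Ico_eq_sum_range]
  simp_rw [pow_add]
  rw [← Finset.mul_sum, div_eq_mul_inv]
  apply mul_le_mul_of_nonneg_left _ (pow_nonneg h0 a)
  have hs := summable_geometric_of_lt_one h0 h1
  calc ∑ i ∈ Finset.range (M + 1 - a), r^i
      ≤ ∑' i : ℕ, r^i := Summable.sum_le_tsum _ (fun i _ => pow_nonneg h0 i) hs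
    _ = (1-r)⁻¹ := tsum_geometric_of_lt_one h0 h1

lemma two_rpow_natCast_comm (s : ℝ) (j : ℕ) : ((2:ℝ)^s)^j = ((2:ℝ)^j) ^ s := by
  rw [← Real.rpow_natCast ((2:ℝ)^s) j, ← Real.rpow_natCast 2 j,
    ← Real.rpow_mul (by norm_num), ← Real.rpow_mul (by norm_num), mul_comm]

lemma two_pow_toNat_le {R : ℝ} (hR : 1 ≤ R) : (2:ℝ)^(⌊Real.logb 2 R⌋).toNat ≤ R := by
  have hlb : 0 ≤ Real.logb 2 R := Real.logb_nonneg one_lt_two hR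
  have hfl : (0:ℤ) ≤ ⌊Real.logb 2 R⌋ := Int.le_floor.2 (by exact_mod_cast hlb)
  have hle : (((⌊Real.logb 2 R⌋).toNat : ℕ) : ℝ) ≤ Real.logb 2 R := by
    have := Int.floor_le (α := ℝ) (Real.logb 2 R)
    have hc : (((⌊Real.logb 2 R⌋).toNat : ℕ) : ℝ) = ((⌊Real.logb 2 R⌋ : ℤ) : ℝ) := by
      exact_mod_cast congrArg (fun z : ℤ => (z : ℝ)) (Int.toNat_of_nonneg hfl)
    linarith [hc ▸ this]
  calc (2:ℝ)^(⌊Real.logb 2 R⌋).toNat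
      = (2:ℝ)^(((⌊Real.logb 2 R⌋).toNat : ℕ) : ℝ) := (Real.rpow_natCast 2 _).symm
    _ ≤ (2:ℝ)^(Real.logb 2 R) := Real.rpow_le_rpow_of_exponent_le one_le_two hle
    _ = R := Real.rpow_logb two_pos (by norm_num) (by linarith)

lemma lt_two_pow_toNat_succ {R : ℝ} (hR : 1 ≤ R) :
    R < 2 * (2:ℝ)^(⌊Real.logb 2 R⌋).toNat := by
  have hlt : Real.logb 2 R < ((⌊Real.logb 2 R⌋).toNat : ℝ) + 1 := by
    have h1 := Int.lt_floor_add_one (R := ℝ) (Real.logb 2 R)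
    have h2 : ((⌊Real.logb 2 R⌋ : ℤ) : ℝ) ≤ (((⌊Real.logb 2 R⌋).toNat : ℕ) : ℝ) := by
      exact_mod_cast Int.self_le_toNat _
    linarith
  calc R = (2:ℝ)^(Real.logb 2 R) := (Real.rpow_logb two_pos (by norm_num) (by linarith)).symm
    _ < (2:ℝ)^(((⌊Real.logb 2 R⌋).toNat : ℝ) + 1) := Real.rpow_lt_rpow_of_exponent_lt one_lt_two hlt
    _ = 2 * (2:ℝ)^(⌊Real.logb 2 R⌋).toNat := by
        rw [Real.rpow_add two_pos, Real.rpow_one, Real.rpow_natCast]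
        ring

lemma box_sum_le (t : ℝ) (ht : t ≤ 0) (htd : 0 < (d:ℝ) + t) (R : ℝ) (hR : 1 ≤ R)
    (F : Finset (Fin d → ℤ)) (hF : ∀ l ∈ F, jbracket l ≤ R) :
    ∑ l ∈ F, jbracket l ^ t
      ≤ (8:ℝ)^d * (2:ℝ)^((d:ℝ)+t) / ((2:ℝ)^((d:ℝ)+t) - 1) * R ^ ((d:ℝ)+t) := by
  classical
  set s : ℝ := (d:ℝ) + t with hs
  have hr1 : (1:ℝ) < 2 ^ s := by
    have h := Real.rpow_lt_rpow_of_exponent_lt (x := (2:ℝ)) one_lt_two htd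
    simpa using h
  set J : ℕ := (⌊Real.logb 2 R⌋).toNat + 1 with hJ
  have hRpos : (0:ℝ) < R := by linarith
  have hmaps : ∀ l ∈ F, dyad l ∈ Finset.range J := by
    intro l hl
    rw [Finset.mem_range, hJ]
    have h1 : Real.logb 2 (jbracket l) ≤ Real.logb 2 R :=
      Real.logb_le_logb_of_le one_lt_two (jb_pos l) (hF l hl)
    have h2 : ⌊Real.logb 2 (jbracket l)⌋ ≤ ⌊Real.logb 2 R⌋ := Int.floor_le_floor h1
    exact Nat.lt_succ_of_le (Int.toNat_le_toNat h2)
  rw [← Finset.sum_fiberwise_of_maps_to hmaps (fun l => jbracket l ^ t)]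
  have hshell : ∀ j ∈ Finset.range J,
      (∑ l ∈ F.filter (fun l => dyad l = j), jbracket l ^ t) ≤ (8:ℝ)^d * ((2:ℝ)^s)^j := by
    intro j _
    apply shell_sum_le t ht j
    intro l hl
    rw [Finset.mem_filter] at hl
    rw [← hl.2]
    exact dyad_spec l
  have h2J : ((2:ℝ))^J ≤ 2 * R := by
    rw [hJ, pow_succ]
    have := two_pow_toNat_le hR
    nlinarith
  have hrJ : ((2:ℝ)^s)^J ≤ (2:ℝ)^s * R^s := by
    rw [two_rpow_natCast_comm]
    calc ((2:ℝ)^J : ℝ) ^ s ≤ (2*R) ^ s :=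
          Real.rpow_le_rpow (by positivity) h2J (le_of_lt htd)
      _ = (2:ℝ)^s * R^s := Real.mul_rpow (by norm_num) (le_of_lt hRpos)
  calc (∑ j ∈ Finset.range J, ∑ l ∈ F.filter (fun l => dyad l = j), jbracket l ^ t)
      ≤ ∑ j ∈ Finset.range J, (8:ℝ)^d * ((2:ℝ)^s)^j := Finset.sum_le_sum hshell
    _ = (8:ℝ)^d * ∑ j ∈ Finset.range J, ((2:ℝ)^s)^j := by rw [Finset.mul_sum]
    _ ≤ (8:ℝ)^d * (((2:ℝ)^s)^J / ((2:ℝ)^s - 1)) :=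
        mul_le_mul_of_nonneg_left (geom_range_le hr1 J) (by positivity)
    _ ≤ (8:ℝ)^d * (((2:ℝ)^s * R^s) / ((2:ℝ)^s - 1)) := by
        have hden : (0:ℝ) < (2:ℝ)^s - 1 := by linarith
        gcongr
    _ = (8:ℝ)^d * (2:ℝ)^s / ((2:ℝ)^s - 1) * R ^ s := by ring

lemma tail_sum_le (t : ℝ) (ht : t ≤ 0) (htd : (d:ℝ) + t < 0) (R : ℝ) (hR : 1 ≤ R)
    (F : Finset (Fin d → ℤ)) (hF : ∀ l ∈ F, R ≤ jbracket l) :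
    ∑ l ∈ F, jbracket l ^ t
      ≤ (8:ℝ)^d * (2:ℝ)^(-((d:ℝ)+t)) / (1 - (2:ℝ)^((d:ℝ)+t)) * R ^ ((d:ℝ)+t) := by
  classical
  set s : ℝ := (d:ℝ) + t with hs
  have hr0 : (0:ℝ) < 2 ^ s := Real.rpow_pos_of_pos two_pos s
  have hr1 : (2:ℝ) ^ s < 1 := Real.rpow_lt_one_of_one_lt_of_neg one_lt_two htd
  set j0 : ℕ := (⌊Real.logb 2 R⌋).toNat with hj0
  set M : ℕ := F.sup dyad with hM
  have hRpos : (0:ℝ) < R := by linarith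
  have hmaps : ∀ l ∈ F, dyad l ∈ Finset.Icc j0 M := by
    intro l hl
    rw [Finset.mem_Icc]
    constructor
    · have h1 : Real.logb 2 R ≤ Real.logb 2 (jbracket l) :=
        Real.logb_le_logb_of_le one_lt_two hRpos (hF l hl)
      exact Int.toNat_le_toNat (Int.floor_le_floor h1)
    · exact Finset.le_sup hl
  rw [← Finset.sum_fiberwise_of_maps_to hmaps (fun l => jbracket l ^ t)]
  have hshell : ∀ j ∈ Finset.Icc j0 M,
      (∑ l ∈ F.filter (fun l => dyad l = j), jbracket l ^ t) ≤ (8:ℝ)^d * ((2:ℝ)^s)^j := by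
    intro j _
    apply shell_sum_le t ht j
    intro l hl
    rw [Finset.mem_filter] at hl
    rw [← hl.2]
    exact dyad_spec l
  have hrj0 : ((2:ℝ)^s)^j0 ≤ (2:ℝ)^(-s) * R^s := by
    rw [two_rpow_natCast_comm]
    have hhalf : R / 2 ≤ (2:ℝ)^(j0:ℕ) := by
      have := lt_two_pow_toNat_succ hR
      rw [hj0]
      linarith
    calc ((2:ℝ)^(j0:ℕ) : ℝ) ^ s ≤ (R/2) ^ s :=
          Real.rpow_le_rpow_of_nonpos (by positivity) hhalf (le_of_lt htd)
      _ = R^s / (2:ℝ)^s := Real.div_rpow (le_of_lt hRpos) (by norm_num : (0:ℝ) ≤ 2) s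
      _ = (2:ℝ)^(-s) * R^s := by rw [Real.rpow_neg (by norm_num : (0:ℝ) ≤ 2)]; ring
  calc (∑ j ∈ Finset.Icc j0 M, ∑ l ∈ F.filter (fun l => dyad l = j), jbracket l ^ t)
      ≤ ∑ j ∈ Finset.Icc j0 M, (8:ℝ)^d * ((2:ℝ)^s)^j := Finset.sum_le_sum hshell
    _ = (8:ℝ)^d * ∑ j ∈ Finset.Icc j0 M, ((2:ℝ)^s)^j := by rw [Finset.mul_sum]
    _ ≤ (8:ℝ)^d * (((2:ℝ)^s)^j0 / (1 - (2:ℝ)^s)) :=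
        mul_le_mul_of_nonneg_left (geom_Icc_le (le_of_lt hr0) hr1 j0 M) (by positivity)
    _ ≤ (8:ℝ)^d * (((2:ℝ)^(-s) * R^s) / (1 - (2:ℝ)^s)) := by
        have hden : (0:ℝ) < 1 - (2:ℝ)^s := by linarith
        gcongr
    _ = (8:ℝ)^d * (2:ℝ)^(-s) / (1 - (2:ℝ)^s) * R ^ s := by ring


lemma main_finsum {d : ℕ} (α β : ℝ) (hα0 : α ≤ 0) (hβ0 : β ≤ 0)
    (hα : -(d : ℝ) < α) (hβ : -(d : ℝ) < β) (hαβ : α + β < -(d : ℝ))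
    (k : Fin d → ℤ) (F : Finset (Fin d → ℤ)) :
    ∑ l ∈ F, jbracket l ^ α * jbracket (k - l) ^ β
      ≤ ((8:ℝ)^d * (2:ℝ)^((d:ℝ)+α) / ((2:ℝ)^((d:ℝ)+α) - 1) / (2:ℝ)^β
        + (8:ℝ)^d * (2:ℝ)^((d:ℝ)+β) / ((2:ℝ)^((d:ℝ)+β) - 1) / (2:ℝ)^α
        + 2 * ((8:ℝ)^d * (2:ℝ)^(-((d:ℝ)+α+β)) / (1 - (2:ℝ)^((d:ℝ)+α+β))))
        * jbracket k ^ ((d:ℝ)+α+β) := by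
  classical
  have hdα : 0 < (d:ℝ) + α := by linarith
  have hdβ : 0 < (d:ℝ) + β := by linarith
  have hdαβ : (d:ℝ) + α + β < 0 := by linarith
  set K := jbracket k with hKdef
  have hK : 1 ≤ K := one_le_jb k
  have hKpos : (0:ℝ) < K := by linarith
  set Bα : ℝ := (8:ℝ)^d * (2:ℝ)^((d:ℝ)+α) / ((2:ℝ)^((d:ℝ)+α) - 1) with hBα
  set Bβ : ℝ := (8:ℝ)^d * (2:ℝ)^((d:ℝ)+β) / ((2:ℝ)^((d:ℝ)+β) - 1) with hBβ
  set T : ℝ := (8:ℝ)^d * (2:ℝ)^(-((d:ℝ)+α+β)) / (1 - (2:ℝ)^((d:ℝ)+α+β)) with hT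
  set f : (Fin d → ℤ) → ℝ := fun l => jbracket l ^ α * jbracket (k - l) ^ β with hf
  set P : (Fin d → ℤ) → Prop := fun l => jbracket l ≤ jbracket (k - l) with hP
  set Q : (Fin d → ℤ) → Prop := fun l => jbracket l ≤ K with hQ
  set Q' : (Fin d → ℤ) → Prop := fun l => jbracket (k - l) ≤ K with hQ'
  have h2βpos : (0:ℝ) < (2:ℝ)^β := Real.rpow_pos_of_pos two_pos β
  have h2αpos : (0:ℝ) < (2:ℝ)^α := Real.rpow_pos_of_pos two_pos α
  have himage : ∀ (γ : ℝ) (G : Finset (Fin d → ℤ)),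
      ∑ m ∈ G.image (fun l => k - l), jbracket m ^ γ = ∑ l ∈ G, jbracket (k - l) ^ γ := by
    intro γ G
    apply Finset.sum_image
    intro x _ y _ h
    exact sub_right_injective h
  have hsplit : ∑ l ∈ F, f l
      = ((∑ l ∈ (F.filter P).filter Q, f l)
          + ∑ l ∈ (F.filter P).filter (fun l => ¬ Q l), f l)
      + ((∑ l ∈ (F.filter (fun l => ¬ P l)).filter Q', f l)
          + ∑ l ∈ (F.filter (fun l => ¬ P l)).filter (fun l => ¬ Q' l), f l) := by
    rw [Finset.sum_filter_add_sum_filter_not ((F.filter P)) Q f,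
        Finset.sum_filter_add_sum_filter_not ((F.filter (fun l => ¬ P l))) Q' f,
        Finset.sum_filter_add_sum_filter_not F P f]
  -- Piece 1
  have hS1 : ∑ l ∈ (F.filter P).filter Q, f l ≤ Bα / (2:ℝ)^β * K ^ ((d:ℝ)+α+β) := by
    have hstep : ∀ l ∈ (F.filter P).filter Q, f l ≤ (K/2)^β * jbracket l ^ α := by
      intro l hl
      rw [Finset.mem_filter, Finset.mem_filter] at hl
      obtain ⟨⟨hlF, hlP⟩, hlQ⟩ := hl
      have h1 : K / 2 ≤ jbracket (k - l) := by
        have h0 := jb_peetre k l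
        have h2 : jbracket l ≤ jbracket (k - l) := hlP
        rw [hKdef]
        linarith
      have h3 : jbracket (k - l) ^ β ≤ (K/2) ^ β :=
        Real.rpow_le_rpow_of_nonpos (by positivity) h1 hβ0
      have h4 : (0:ℝ) ≤ jbracket l ^ α := Real.rpow_nonneg (le_of_lt (jb_pos l)) α
      calc f l = jbracket l ^ α * jbracket (k - l) ^ β := rfl
        _ ≤ jbracket l ^ α * (K/2)^β := mul_le_mul_of_nonneg_left h3 h4
        _ = (K/2)^β * jbracket l ^ α := by ring
    have hbox := box_sum_le α hα0 hdα K hK ((F.filter P).filter Q)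
      (by intro l hl; rw [Finset.mem_filter] at hl; exact hl.2)
    calc ∑ l ∈ (F.filter P).filter Q, f l
        ≤ ∑ l ∈ (F.filter P).filter Q, (K/2)^β * jbracket l ^ α := Finset.sum_le_sum hstep
      _ = (K/2)^β * ∑ l ∈ (F.filter P).filter Q, jbracket l ^ α := by rw [Finset.mul_sum]
      _ ≤ (K/2)^β * (Bα * K ^ ((d:ℝ)+α)) := by
          apply mul_le_mul_of_nonneg_left _ (Real.rpow_nonneg (by positivity) β)
          exact hbox
      _ = Bα / (2:ℝ)^β * K ^ ((d:ℝ)+α+β) := by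
          have hKsplit : K ^ ((d:ℝ)+α+β) = K ^ ((d:ℝ)+α) * K ^ β := by
            rw [← Real.rpow_add hKpos]
          rw [Real.div_rpow (le_of_lt hKpos) (by norm_num : (0:ℝ) ≤ 2) β, hKsplit]
          field_simp [ne_of_gt h2βpos]
  -- Piece 2
  have hS2 : ∑ l ∈ (F.filter P).filter (fun l => ¬ Q l), f l ≤ T * K ^ ((d:ℝ)+α+β) := by
    have hstep : ∀ l ∈ (F.filter P).filter (fun l => ¬ Q l), f l ≤ jbracket l ^ (α + β) := by
      intro l hl
      rw [Finset.mem_filter, Finset.mem_filter] at hl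
      obtain ⟨⟨hlF, hlP⟩, hlQ⟩ := hl
      have h3 : jbracket (k - l) ^ β ≤ jbracket l ^ β :=
        Real.rpow_le_rpow_of_nonpos (jb_pos l) hlP hβ0
      have h4 : (0:ℝ) ≤ jbracket l ^ α := Real.rpow_nonneg (le_of_lt (jb_pos l)) α
      calc f l = jbracket l ^ α * jbracket (k - l) ^ β := rfl
        _ ≤ jbracket l ^ α * jbracket l ^ β := mul_le_mul_of_nonneg_left h3 h4
        _ = jbracket l ^ (α + β) := (Real.rpow_add (jb_pos l) α β).symm
    have htail := tail_sum_le (α + β) (by linarith) (by rw [show (d:ℝ)+(α+β) = (d:ℝ)+α+β by ring]; exact hdαβ)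
      K hK ((F.filter P).filter (fun l => ¬ Q l))
      (by intro l hl; rw [Finset.mem_filter] at hl; exact le_of_not_ge hl.2)
    rw [show (d:ℝ)+(α+β) = (d:ℝ)+α+β by ring] at htail
    calc ∑ l ∈ (F.filter P).filter (fun l => ¬ Q l), f l
        ≤ ∑ l ∈ (F.filter P).filter (fun l => ¬ Q l), jbracket l ^ (α+β) :=
          Finset.sum_le_sum hstep
      _ ≤ T * K ^ ((d:ℝ)+α+β) := htail
  -- Piece 3
  have hS3 : ∑ l ∈ (F.filter (fun l => ¬ P l)).filter Q', f l
      ≤ Bβ / (2:ℝ)^α * K ^ ((d:ℝ)+α+β) := by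
    have hstep : ∀ l ∈ (F.filter (fun l => ¬ P l)).filter Q',
        f l ≤ (K/2)^α * jbracket (k - l) ^ β := by
      intro l hl
      rw [Finset.mem_filter, Finset.mem_filter] at hl
      obtain ⟨⟨hlF, hlP⟩, hlQ⟩ := hl
      have hlP' : jbracket (k - l) ≤ jbracket l := le_of_not_ge hlP
      have h1 : K / 2 ≤ jbracket l := by
        have h0 := jb_peetre k l
        rw [hKdef]
        linarith
      have h3 : jbracket l ^ α ≤ (K/2) ^ α :=
        Real.rpow_le_rpow_of_nonpos (by positivity) h1 hα0
      have h4 : (0:ℝ) ≤ jbracket (k - l) ^ β := Real.rpow_nonneg (le_of_lt (jb_pos _)) β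
      calc f l = jbracket l ^ α * jbracket (k - l) ^ β := rfl
        _ ≤ (K/2)^α * jbracket (k - l) ^ β := mul_le_mul_of_nonneg_right h3 h4
    have hbox := box_sum_le β hβ0 hdβ K hK
      (((F.filter (fun l => ¬ P l)).filter Q').image (fun l => k - l))
      (by
        intro m hm
        rw [Finset.mem_image] at hm
        obtain ⟨l, hl, rfl⟩ := hm
        rw [Finset.mem_filter] at hl
        exact hl.2)
    rw [himage β] at hbox
    calc ∑ l ∈ (F.filter (fun l => ¬ P l)).filter Q', f l
        ≤ ∑ l ∈ (F.filter (fun l => ¬ P l)).filter Q', (K/2)^α * jbracket (k - l) ^ β :=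
          Finset.sum_le_sum hstep
      _ = (K/2)^α * ∑ l ∈ (F.filter (fun l => ¬ P l)).filter Q', jbracket (k - l) ^ β := by
          rw [Finset.mul_sum]
      _ ≤ (K/2)^α * (Bβ * K ^ ((d:ℝ)+β)) := by
          apply mul_le_mul_of_nonneg_left _ (Real.rpow_nonneg (by positivity) α)
          exact hbox
      _ = Bβ / (2:ℝ)^α * K ^ ((d:ℝ)+α+β) := by
          have hKsplit : K ^ ((d:ℝ)+α+β) = K ^ ((d:ℝ)+β) * K ^ α := by
            rw [← Real.rpow_add hKpos]
            congr 1
            ring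
          rw [Real.div_rpow (le_of_lt hKpos) (by norm_num : (0:ℝ) ≤ 2) α, hKsplit]
          field_simp [ne_of_gt h2αpos]
  -- Piece 4
  have hS4 : ∑ l ∈ (F.filter (fun l => ¬ P l)).filter (fun l => ¬ Q' l), f l
      ≤ T * K ^ ((d:ℝ)+α+β) := by
    have hstep : ∀ l ∈ (F.filter (fun l => ¬ P l)).filter (fun l => ¬ Q' l),
        f l ≤ jbracket (k - l) ^ (α + β) := by
      intro l hl
      rw [Finset.mem_filter, Finset.mem_filter] at hl
      obtain ⟨⟨hlF, hlP⟩, hlQ⟩ := hl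
      have hlP' : jbracket (k - l) ≤ jbracket l := le_of_not_ge hlP
      have h3 : jbracket l ^ α ≤ jbracket (k - l) ^ α :=
        Real.rpow_le_rpow_of_nonpos (jb_pos _) hlP' hα0
      have h4 : (0:ℝ) ≤ jbracket (k - l) ^ β := Real.rpow_nonneg (le_of_lt (jb_pos _)) β
      calc f l = jbracket l ^ α * jbracket (k - l) ^ β := rfl
        _ ≤ jbracket (k - l) ^ α * jbracket (k - l) ^ β := mul_le_mul_of_nonneg_right h3 h4
        _ = jbracket (k - l) ^ (α + β) := (Real.rpow_add (jb_pos _) α β).symm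
    have htail := tail_sum_le (α + β) (by linarith)
      (by rw [show (d:ℝ)+(α+β) = (d:ℝ)+α+β by ring]; exact hdαβ) K hK
      (((F.filter (fun l => ¬ P l)).filter (fun l => ¬ Q' l)).image (fun l => k - l))
      (by
        intro m hm
        rw [Finset.mem_image] at hm
        obtain ⟨l, hl, rfl⟩ := hm
        rw [Finset.mem_filter] at hl
        exact le_of_not_ge hl.2)
    rw [show (d:ℝ)+(α+β) = (d:ℝ)+α+β by ring, himage (α+β)] at htail
    calc ∑ l ∈ (F.filter (fun l => ¬ P l)).filter (fun l => ¬ Q' l), f l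
        ≤ ∑ l ∈ (F.filter (fun l => ¬ P l)).filter (fun l => ¬ Q' l),
            jbracket (k - l) ^ (α+β) := Finset.sum_le_sum hstep
      _ ≤ T * K ^ ((d:ℝ)+α+β) := htail
  have hring : (Bα / (2:ℝ)^β + Bβ / (2:ℝ)^α + 2 * T) * K ^ ((d:ℝ)+α+β)
      = Bα / (2:ℝ)^β * K ^ ((d:ℝ)+α+β) + T * K ^ ((d:ℝ)+α+β)
        + (Bβ / (2:ℝ)^α * K ^ ((d:ℝ)+α+β) + T * K ^ ((d:ℝ)+α+β)) := by ring
  rw [hsplit]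
  rw [show ((8:ℝ)^d * (2:ℝ)^((d:ℝ)+α) / ((2:ℝ)^((d:ℝ)+α) - 1) / (2:ℝ)^β
        + (8:ℝ)^d * (2:ℝ)^((d:ℝ)+β) / ((2:ℝ)^((d:ℝ)+β) - 1) / (2:ℝ)^α
        + 2 * ((8:ℝ)^d * (2:ℝ)^(-((d:ℝ)+α+β)) / (1 - (2:ℝ)^((d:ℝ)+α+β))))
      = Bα / (2:ℝ)^β + Bβ / (2:ℝ)^α + 2 * T from rfl]
  rw [hring]
  exact add_le_add (add_le_add hS1 hS2) (add_le_add hS3 hS4)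

end DCEaux

/-- Discrete convolution estimate: for nonpositive `α, β` with `α, β > -d` and `α + β < -d`,
`∑_{ℓ ∈ ℤ^d} ⟨ℓ⟩^α ⟨k-ℓ⟩^β ≲ ⟨k⟩^{d+α+β}` uniformly in `k`. -/
theorem discrete_convolution_estimate (d : ℕ) (hd : 1 ≤ d) (α β : ℝ)
    (hα0 : α ≤ 0) (hβ0 : β ≤ 0) (hα : -(d : ℝ) < α) (hβ : -(d : ℝ) < β)
    (hαβ : α + β < -(d : ℝ)) :
    ∃ C : ℝ, ∀ k : Fin d → ℤ,
      (∑' l : Fin d → ℤ, jbracket l ^ α * jbracket (k - l) ^ β)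
        ≤ C * jbracket k ^ ((d : ℝ) + α + β) := by
  classical
  refine ⟨(8:ℝ)^d * (2:ℝ)^((d:ℝ)+α) / ((2:ℝ)^((d:ℝ)+α) - 1) / (2:ℝ)^β
        + (8:ℝ)^d * (2:ℝ)^((d:ℝ)+β) / ((2:ℝ)^((d:ℝ)+β) - 1) / (2:ℝ)^α
        + 2 * ((8:ℝ)^d * (2:ℝ)^(-((d:ℝ)+α+β)) / (1 - (2:ℝ)^((d:ℝ)+α+β))), fun k => ?_⟩
  have hbound := DCEaux.main_finsum α β hα0 hβ0 hα hβ hαβ k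
  have hnn : (0 : (Fin d → ℤ) → ℝ) ≤ fun l => jbracket l ^ α * jbracket (k - l) ^ β := by
    intro l
    exact mul_nonneg (Real.rpow_nonneg (DCEaux.jb_pos l).le α)
      (Real.rpow_nonneg (DCEaux.jb_pos (k - l)).le β)
  have hsummable := summable_of_sum_le hnn hbound
  exact Summable.tsum_le_of_sum_le hsummable hbound
end

section
/- Let a, b, c > 0 and γ ∈ [0,1]. Then there is a universal constant C (independent of a, b, c, γ, t) such that ∫_{-∞}^t ∫_{-∞}^t e^{-a(t-s) - b|u-s| - c(t-u)} ds du ≤ C · a^{-(2-γ)/2} · c^{-(2-γ)/2} · b^{-γ}. -/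
open MeasureTheory Set Real Filter intervalIntegral

/-- Integrability of `exp (k s)` on `Iic t` for `k > 0`. -/
lemma deib_integrableOn_exp_mul (k t : ℝ) (hk : 0 < k) :
    IntegrableOn (fun s : ℝ => Real.exp (k * s)) (Iic t) := by
  refine integrableOn_Iic_of_intervalIntegral_norm_bounded (Real.exp (k * t) / k) t
    (fun y => ((Real.continuous_exp.comp (continuous_const.mul continuous_id)).intervalIntegrable
      _ _).1) tendsto_id (Filter.Eventually.of_forall fun y => ?_)
  have hint : (∫ s in (id y : ℝ)..t, Real.exp (k * s))
      = k⁻¹ * (Real.exp (k * t) - Real.exp (k * y)) := by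
    rw [integral_comp_mul_left (fun x => Real.exp x) hk.ne', integral_exp, smul_eq_mul]; simp
  simp_rw [Real.norm_eq_abs, Real.abs_exp]
  rw [hint, div_eq_inv_mul]
  nlinarith [Real.exp_pos (k * y), inv_pos.mpr hk]

/-- Value of `∫ s in Iic t, exp (k s)` for `k > 0`. -/
lemma deib_integral_exp_mul (k t : ℝ) (hk : 0 < k) :
    (∫ s in Iic t, Real.exp (k * s)) = Real.exp (k * t) / k := by
  refine tendsto_nhds_unique
    (intervalIntegral_tendsto_integral_Iic _ (deib_integrableOn_exp_mul k t hk) tendsto_id) ?_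
  have hint : ∀ y : ℝ, (∫ s in (id y : ℝ)..t, Real.exp (k * s))
      = k⁻¹ * (Real.exp (k * t) - Real.exp (k * y)) := fun y => by
    rw [integral_comp_mul_left (fun x => Real.exp x) hk.ne', integral_exp, smul_eq_mul]; simp
  simp_rw [hint]
  have : Tendsto (fun y : ℝ => Real.exp (k * y)) atBot (nhds 0) := by
    apply Real.tendsto_exp_atBot.comp
    exact Tendsto.const_mul_atBot hk tendsto_id
  have h2 : Tendsto (fun y : ℝ => k⁻¹ * (Real.exp (k * t) - Real.exp (k * y))) atBot
      (nhds (k⁻¹ * (Real.exp (k * t) - 0))) :=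
    (tendsto_const_nhds.sub this).const_mul _
  simpa [div_eq_inv_mul] using h2

/-- Integrability of `exp (-(k (t - s)))` on `Iic t`. -/
lemma deib_l1 (k t : ℝ) (hk : 0 < k) :
    IntegrableOn (fun s : ℝ => Real.exp (-(k * (t - s)))) (Iic t) := by
  have : (fun s : ℝ => Real.exp (-(k * (t - s))))
      = fun s : ℝ => Real.exp (-(k * t)) * Real.exp (k * s) := by
    funext s; rw [← Real.exp_add]; ring_nf
  rw [this]
  exact (deib_integrableOn_exp_mul k t hk).const_mul _

/-- Value of `∫ s in Iic t, exp (-(k (t - s)))`. -/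
lemma deib_l2 (k t : ℝ) (hk : 0 < k) :
    (∫ s in Iic t, Real.exp (-(k * (t - s)))) = k⁻¹ := by
  have h : (fun s : ℝ => Real.exp (-(k * (t - s))))
      = fun s : ℝ => Real.exp (-(k * t)) * Real.exp (k * s) := by
    funext s; rw [← Real.exp_add]; ring_nf
  rw [h, MeasureTheory.integral_const_mul, deib_integral_exp_mul k t hk, Real.exp_neg]
  field_simp

/-- Integrability of `exp (-(b |x|))` over `ℝ`. -/
lemma deib_integrable_exp_abs (b : ℝ) (hb : 0 < b) :
    Integrable (fun x : ℝ => Real.exp (-(b * |x|))) := by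
  rw [← integrableOn_univ, ← Set.Iic_union_Ioi (a := (0 : ℝ))]
  apply IntegrableOn.union
  · refine ((deib_integrableOn_exp_mul b 0 hb).congr_fun (fun x hx => ?_) measurableSet_Iic)
    rw [abs_of_nonpos hx]; ring_nf
  · refine (((exp_neg_integrableOn_Ioi 0 hb)).congr_fun (fun x hx => ?_) measurableSet_Ioi)
    rw [abs_of_pos hx]; ring_nf

/-- Value of `∫ x, exp (-(b |x|))`. -/
lemma deib_integral_exp_abs (b : ℝ) (hb : 0 < b) :
    (∫ x : ℝ, Real.exp (-(b * |x|))) = 2 * b⁻¹ := by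
  have h := integral_comp_abs (f := fun x : ℝ => Real.exp (-(b * x)))
  rw [h]
  have h2 : (∫ x : ℝ in Ioi 0, Real.exp (-(b * x))) = b⁻¹ := by
    have := MeasureTheory.integral_comp_mul_left_Ioi (fun y : ℝ => Real.exp (-y)) 0 hb
    simp only [mul_zero, smul_eq_mul] at this
    rw [this, integral_exp_neg_Ioi, neg_zero, Real.exp_zero, mul_one]
  rw [h2]

/-- Integrability of the translated kernel. -/
lemma deib_l3 (b v : ℝ) (hb : 0 < b) :
    Integrable (fun x : ℝ => Real.exp (-(b * |x - v|))) :=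
  (deib_integrable_exp_abs b hb).comp_sub_right v

/-- Value of the translated integral. -/
lemma deib_l4 (b v : ℝ) (hb : 0 < b) :
    (∫ x : ℝ, Real.exp (-(b * |x - v|))) = 2 * b⁻¹ := by
  have : (∫ x : ℝ, Real.exp (-(b * |x - v|)))
      = ∫ x : ℝ, Real.exp (-(b * |x|)) := by
    simpa [sub_eq_add_neg] using
      MeasureTheory.integral_add_right_eq_self (fun x : ℝ => Real.exp (-(b * |x|))) (-v)
  rw [this, deib_integral_exp_abs b hb]

/-- Three-point geometric interpolation of upper bounds. -/
lemma deib_interp {I x y z p q : ℝ} (hI : 0 ≤ I) (hx : I ≤ x) (hy : I ≤ y) (hz : I ≤ z)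
    (hp : 0 ≤ p) (hq : 0 ≤ q) (hpq : p + q + q = 1) :
    I ≤ x ^ p * y ^ q * z ^ q := by
  have hx0 : 0 ≤ x := hI.trans hx
  have hy0 : 0 ≤ y := hI.trans hy
  have hz0 : 0 ≤ z := hI.trans hz
  have h1 : I = I ^ p * I ^ q * I ^ q := by
    rw [← Real.rpow_add' hI (by intro h; rw [show p + q = 0 from h] at hpq; nlinarith),
      ← Real.rpow_add' hI (by rw [hpq]; norm_num), hpq, Real.rpow_one]
  calc I = I ^ p * I ^ q * I ^ q := h1
    _ ≤ x ^ p * y ^ q * z ^ q := by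
        refine mul_le_mul (mul_le_mul (Real.rpow_le_rpow hI hx hp)
          (Real.rpow_le_rpow hI hy hq) (Real.rpow_nonneg hI q)
          (Real.rpow_nonneg hx0 p)) (Real.rpow_le_rpow hI hz hq)
          (Real.rpow_nonneg hI q) (by positivity)

/-- There is a universal constant `C` such that for all `a, b, c > 0`, `γ ∈ [0,1]` and `t ∈ ℝ`,
`∫_{-∞}^t ∫_{-∞}^t e^{-a(t-s) - b|u-s| - c(t-u)} ds du ≤ C a^{-(2-γ)/2} c^{-(2-γ)/2} b^{-γ}`. -/
theorem double_exponential_integral_bound :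
    ∃ C : ℝ, 0 < C ∧ ∀ (a b c γ t : ℝ), 0 < a → 0 < b → 0 < c → γ ∈ Set.Icc (0 : ℝ) 1 →
      (∫ u in Set.Iic t, ∫ s in Set.Iic t,
          Real.exp (-(a * (t - s)) - b * |u - s| - c * (t - u)))
        ≤ C * a ^ (-(2 - γ) / 2) * c ^ (-(2 - γ) / 2) * b ^ (-γ) := by
  refine ⟨2, two_pos, fun a b c γ t ha hb hc hγ => ?_⟩
  obtain ⟨hγ0, hγ1⟩ := hγ
  set f : ℝ → ℝ → ℝ :=
    fun u s => Real.exp (-(a * (t - s)) - b * |u - s| - c * (t - u)) with hf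
  set I : ℝ := ∫ u in Set.Iic t, ∫ s in Set.Iic t, f u s with hIdef
  have hfnn : ∀ u s, 0 ≤ f u s := fun u s => (Real.exp_pos _).le
  have hInn : 0 ≤ I :=
    MeasureTheory.integral_nonneg fun u => MeasureTheory.integral_nonneg fun s => hfnn u s
  -- Bound A : I ≤ a⁻¹ * c⁻¹
  have pointA : ∀ u s : ℝ, f u s ≤ Real.exp (-(c * (t - u))) * Real.exp (-(a * (t - s))) := by
    intro u s
    rw [← Real.exp_add]
    apply Real.exp_le_exp.mpr
    nlinarith [abs_nonneg (u - s), hb.le, mul_nonneg hb.le (abs_nonneg (u - s))]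
  have innerA : ∀ u : ℝ, (∫ s in Set.Iic t, f u s) ≤ Real.exp (-(c * (t - u))) * a⁻¹ := by
    intro u
    have step : (∫ s in Set.Iic t, f u s)
        ≤ ∫ s in Set.Iic t, Real.exp (-(c * (t - u))) * Real.exp (-(a * (t - s))) := by
      refine integral_mono_of_nonneg (Filter.Eventually.of_forall fun s => hfnn u s)
        ((deib_l1 a t ha).const_mul _) (Filter.Eventually.of_forall fun s => pointA u s)
    rwa [MeasureTheory.integral_const_mul, deib_l2 a t ha] at step
  have hA : I ≤ a⁻¹ * c⁻¹ := by
    have step : I ≤ ∫ u in Set.Iic t, Real.exp (-(c * (t - u))) * a⁻¹ := by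
      refine integral_mono_of_nonneg
        (Filter.Eventually.of_forall fun u =>
          MeasureTheory.integral_nonneg fun s => hfnn u s)
        ((deib_l1 c t hc).mul_const _) (Filter.Eventually.of_forall innerA)
    rwa [MeasureTheory.integral_mul_const, deib_l2 c t hc, mul_comm] at step
  -- Bound B : I ≤ c⁻¹ * (2 * b⁻¹)
  have pointB : ∀ u : ℝ, ∀ s ∈ Set.Iic t,
      f u s ≤ Real.exp (-(c * (t - u))) * Real.exp (-(b * |u - s|)) := by
    intro u s hs
    rw [← Real.exp_add]
    apply Real.exp_le_exp.mpr
    have : 0 ≤ a * (t - s) := mul_nonneg ha.le (by simpa [sub_nonneg] using hs)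
    linarith
  have absrw : ∀ u : ℝ, (fun s : ℝ => Real.exp (-(b * |u - s|)))
      = fun s : ℝ => Real.exp (-(b * |s - u|)) := by
    intro u; funext s; rw [abs_sub_comm]
  have innerB : ∀ u : ℝ,
      (∫ s in Set.Iic t, f u s) ≤ Real.exp (-(c * (t - u))) * (2 * b⁻¹) := by
    intro u
    have hint : Integrable (fun s : ℝ => Real.exp (-(b * |u - s|))) := by
      rw [absrw u]; exact deib_l3 b u hb
    have step : (∫ s in Set.Iic t, f u s)
        ≤ ∫ s in Set.Iic t, Real.exp (-(c * (t - u))) * Real.exp (-(b * |u - s|)) := by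
      refine integral_mono_of_nonneg (Filter.Eventually.of_forall fun s => hfnn u s)
        (hint.integrableOn.const_mul _)
        (((ae_restrict_mem measurableSet_Iic).mono (fun s hs => pointB u s hs)))
    have step2 : (∫ s in Set.Iic t, Real.exp (-(b * |u - s|))) ≤ 2 * b⁻¹ := by
      calc (∫ s in Set.Iic t, Real.exp (-(b * |u - s|)))
          ≤ ∫ s : ℝ, Real.exp (-(b * |u - s|)) :=
            setIntegral_le_integral hint
              (Filter.Eventually.of_forall fun s => (Real.exp_pos _).le)
        _ = 2 * b⁻¹ := by rw [absrw u]; exact deib_l4 b u hb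
    rw [MeasureTheory.integral_const_mul] at step
    exact step.trans (by
      have := Real.exp_pos (-(c * (t - u)))
      exact mul_le_mul_of_nonneg_left step2 this.le)
  have hB : I ≤ c⁻¹ * (2 * b⁻¹) := by
    have step : I ≤ ∫ u in Set.Iic t, Real.exp (-(c * (t - u))) * (2 * b⁻¹) := by
      refine integral_mono_of_nonneg
        (Filter.Eventually.of_forall fun u =>
          MeasureTheory.integral_nonneg fun s => hfnn u s)
        ((deib_l1 c t hc).mul_const _) (Filter.Eventually.of_forall innerB)
    rwa [MeasureTheory.integral_mul_const, deib_l2 c t hc] at step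
  -- Bound B' : I ≤ a⁻¹ * (2 * b⁻¹), via Fubini
  have hcont : Continuous fun z : ℝ × ℝ =>
      Real.exp (-(a * (t - z.2)) - b * |z.1 - z.2| - c * (t - z.1)) := by
    fun_prop
  have hprod : Integrable
      (fun z : ℝ × ℝ => Real.exp (-(c * (t - z.1))) * Real.exp (-(a * (t - z.2))))
      ((volume.restrict (Set.Iic t)).prod (volume.restrict (Set.Iic t))) :=
    Integrable.mul_prod (deib_l1 c t hc) (deib_l1 a t ha)
  have hunc : Integrable (Function.uncurry f)
      ((volume.restrict (Set.Iic t)).prod (volume.restrict (Set.Iic t))) := by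
    refine hprod.mono' (hcont.aestronglyMeasurable) ?_
    refine Filter.Eventually.of_forall fun z => ?_
    show ‖f z.1 z.2‖ ≤ _
    rw [Real.norm_eq_abs, abs_of_nonneg (hfnn z.1 z.2)]
    exact pointA z.1 z.2
  have hswap : I = ∫ s in Set.Iic t, ∫ u in Set.Iic t, f u s :=
    MeasureTheory.integral_integral_swap hunc
  have pointB' : ∀ s : ℝ, ∀ u ∈ Set.Iic t,
      f u s ≤ Real.exp (-(a * (t - s))) * Real.exp (-(b * |u - s|)) := by
    intro s u hu
    rw [← Real.exp_add]
    apply Real.exp_le_exp.mpr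
    have : 0 ≤ c * (t - u) := mul_nonneg hc.le (by simpa [sub_nonneg] using hu)
    linarith
  have innerB' : ∀ s : ℝ,
      (∫ u in Set.Iic t, f u s) ≤ Real.exp (-(a * (t - s))) * (2 * b⁻¹) := by
    intro s
    have hint : Integrable (fun u : ℝ => Real.exp (-(b * |u - s|))) := deib_l3 b s hb
    have step : (∫ u in Set.Iic t, f u s)
        ≤ ∫ u in Set.Iic t, Real.exp (-(a * (t - s))) * Real.exp (-(b * |u - s|)) := by
      refine integral_mono_of_nonneg (Filter.Eventually.of_forall fun u => hfnn u s)
        (hint.integrableOn.const_mul _)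
        (((ae_restrict_mem measurableSet_Iic).mono (fun u hu => pointB' s u hu)))
    have step2 : (∫ u in Set.Iic t, Real.exp (-(b * |u - s|))) ≤ 2 * b⁻¹ := by
      calc (∫ u in Set.Iic t, Real.exp (-(b * |u - s|)))
          ≤ ∫ u : ℝ, Real.exp (-(b * |u - s|)) :=
            setIntegral_le_integral hint
              (Filter.Eventually.of_forall fun u => (Real.exp_pos _).le)
        _ = 2 * b⁻¹ := deib_l4 b s hb
    rw [MeasureTheory.integral_const_mul] at step
    exact step.trans (mul_le_mul_of_nonneg_left step2 (Real.exp_pos _).le)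
  have hB' : I ≤ a⁻¹ * (2 * b⁻¹) := by
    rw [hswap]
    have step : (∫ s in Set.Iic t, ∫ u in Set.Iic t, f u s)
        ≤ ∫ s in Set.Iic t, Real.exp (-(a * (t - s))) * (2 * b⁻¹) := by
      refine integral_mono_of_nonneg
        (Filter.Eventually.of_forall fun s =>
          MeasureTheory.integral_nonneg fun u => hfnn u s)
        ((deib_l1 a t ha).mul_const _) (Filter.Eventually.of_forall innerB')
    rwa [MeasureTheory.integral_mul_const, deib_l2 a t ha] at step
  -- Interpolation
  have key : I ≤ (a⁻¹ * c⁻¹) ^ (1 - γ) * (c⁻¹ * (2 * b⁻¹)) ^ (γ / 2)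
      * (a⁻¹ * (2 * b⁻¹)) ^ (γ / 2) :=
    deib_interp hInn hA hB hB' (by linarith) (by linarith) (by ring)
  refine key.trans ?_
  -- Final algebra with rpow
  have lm1 : Real.log (a⁻¹ * c⁻¹) = -Real.log a - Real.log c := by
    rw [Real.log_mul (by positivity) (by positivity), Real.log_inv, Real.log_inv]; ring
  have lm2 : Real.log (c⁻¹ * (2 * b⁻¹)) = -Real.log c + (Real.log 2 - Real.log b) := by
    rw [Real.log_mul (by positivity) (by positivity),
      Real.log_mul (by positivity) (by positivity), Real.log_inv, Real.log_inv]; ring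
  have lm3 : Real.log (a⁻¹ * (2 * b⁻¹)) = -Real.log a + (Real.log 2 - Real.log b) := by
    rw [Real.log_mul (by positivity) (by positivity),
      Real.log_mul (by positivity) (by positivity), Real.log_inv, Real.log_inv]; ring
  have h2e : (2 : ℝ) * a ^ (-(2 - γ) / 2) * c ^ (-(2 - γ) / 2) * b ^ (-γ)
      = Real.exp (Real.log 2) * a ^ (-(2 - γ) / 2) * c ^ (-(2 - γ) / 2) * b ^ (-γ) := by
    rw [Real.exp_log two_pos]
  rw [h2e, Real.rpow_def_of_pos (show (0:ℝ) < a⁻¹ * c⁻¹ by positivity),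
    Real.rpow_def_of_pos (show (0:ℝ) < c⁻¹ * (2 * b⁻¹) by positivity),
    Real.rpow_def_of_pos (show (0:ℝ) < a⁻¹ * (2 * b⁻¹) by positivity),
    Real.rpow_def_of_pos ha, Real.rpow_def_of_pos hc, Real.rpow_def_of_pos hb,
    lm1, lm2, lm3]
  simp only [← Real.exp_add]
  apply Real.exp_le_exp.mpr
  have hlog2 : 0 ≤ Real.log 2 := Real.log_nonneg one_le_two
  nlinarith [mul_nonneg (sub_nonneg.mpr hγ1) hlog2]
end

section
/- Let ℓ ≥ 2, let k ∈ ℕ^ℓ with each k_i ≥ 1, set K = {(i,j) : i ≤ ℓ, j ≤ k_i}, and let α ∈ ℝ_-^K satisfy: for each i, α_{ij} > -d for all j ≤ k_i and ∑_{j≤k_i}(α_{ij}+d) < d; moreover ∑_{i≤ℓ} α_i < -d where α_i := (k_i - 1)d + ∑_{j≤k_i} α_{ij}. Let 𝒫 be the set of p ∈ (ℤ^d)^K such that ∑_{j≤k_i} p_{ij} is the same for all i ≤ ℓ. Then ∑_{p∈𝒫} ∏_{(i,j)∈K} ⟨p_{ij}⟩^{α_{ij}} < ∞. -/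
open scoped ENNReal

namespace LoopAux

open scoped ENNReal

variable {d : ℕ}

lemma sum_sq_nonneg (l : Fin d → ℤ) : (0:ℝ) ≤ ∑ r, ((l r : ℝ))^2 :=
  Finset.sum_nonneg fun _ _ => sq_nonneg _

lemma one_le_jbracket (l : Fin d → ℤ) : 1 ≤ jbracket l := by
  have h : (1:ℝ) ≤ 1 + ∑ r, ((l r:ℝ))^2 := le_add_of_nonneg_right (sum_sq_nonneg l)
  calc (1:ℝ) = 1 ^ ((1:ℝ)/2) := (Real.one_rpow _).symm
  _ ≤ _ := Real.rpow_le_rpow zero_le_one h (by norm_num)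

lemma jbracket_pos (l : Fin d → ℤ) : 0 < jbracket l := lt_of_lt_of_le one_pos (one_le_jbracket l)

lemma jbracket_sq (l : Fin d → ℤ) : jbracket l ^ (2:ℕ) = 1 + ∑ r, ((l r:ℝ))^2 := by
  rw [jbracket, ← Real.rpow_natCast ((1 + ∑ r, ((l r : ℝ)) ^ 2) ^ ((1:ℝ)/2)) 2,
    ← Real.rpow_mul (by positivity)]
  norm_num

lemma jbracket_triangle (q m : Fin d → ℤ) :
    jbracket m ≤ 2 * max (jbracket q) (jbracket (m - q)) := by
  have hXY : jbracket q ≤ max (jbracket q) (jbracket (m-q)) := le_max_left _ _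
  have hYX : jbracket (m-q) ≤ max (jbracket q) (jbracket (m-q)) := le_max_right _ _
  have h1 : jbracket m ^ (2:ℕ) ≤ (2 * max (jbracket q) (jbracket (m-q))) ^ (2:ℕ) := by
    have hq := jbracket_sq q
    have hmq := jbracket_sq (m - q)
    have hm := jbracket_sq m
    have hsum : ∑ r, ((m r : ℝ))^2 ≤ ∑ r, (2 * ((q r:ℝ))^2 + 2 * (((m-q) r : ℝ))^2) := by
      apply Finset.sum_le_sum
      intro r _
      have : ((m-q) r : ℝ) = (m r : ℝ) - (q r : ℝ) := by simp [Pi.sub_apply]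
      rw [this]
      nlinarith [sq_nonneg ((m r : ℝ) - 2 * (q r : ℝ))]
    rw [Finset.sum_add_distrib, ← Finset.mul_sum, ← Finset.mul_sum] at hsum
    have h2 : jbracket q ^ (2:ℕ) ≤ (max (jbracket q) (jbracket (m-q)))^(2:ℕ) :=
      pow_le_pow_left₀ (jbracket_pos q).le hXY 2
    have h3 : jbracket (m-q) ^ (2:ℕ) ≤ (max (jbracket q) (jbracket (m-q)))^(2:ℕ) :=
      pow_le_pow_left₀ (jbracket_pos (m-q)).le hYX 2
    rw [hm]
    rw [hq] at h2; rw [hmq] at h3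
    ring_nf
    nlinarith [h2, h3, hsum]
  nlinarith [jbracket_pos m, jbracket_pos q, lt_of_lt_of_le (jbracket_pos q) hXY, h1]

lemma point_ineq {X Y Z a b γ : ℝ} (hX : 1 ≤ X) (hY : 1 ≤ Y) (hZ : 0 < Z)
    (hZb : Z ≤ 2 * max X Y) (hγ : γ ≤ 0) (haγ : a - γ ≤ 0) (hbγ : b - γ ≤ 0) :
    X ^ a * Y ^ b ≤ (Z / 2) ^ γ * (X ^ (a + b - γ) + Y ^ (a + b - γ)) := by
  have hX0 : (0:ℝ) < X := lt_of_lt_of_le one_pos hX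
  have hY0 : (0:ℝ) < Y := lt_of_lt_of_le one_pos hY
  have hZ2 : (0:ℝ) < Z / 2 := by linarith
  rcases le_total Y X with h | h
  · have hZX : Z / 2 ≤ X := by rw [max_eq_left h] at hZb; linarith
    have h1 : X ^ γ ≤ (Z/2) ^ γ := Real.rpow_le_rpow_of_nonpos hZ2 hZX hγ
    have h2 : X ^ (a - γ) ≤ Y ^ (a - γ) := Real.rpow_le_rpow_of_nonpos hY0 h haγ
    have e1 : X ^ a = X ^ γ * X ^ (a - γ) := by rw [← Real.rpow_add hX0]; ring_nf
    have e2 : Y ^ (a - γ) * Y ^ b = Y ^ (a + b - γ) := by rw [← Real.rpow_add hY0]; ring_nf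
    calc X ^ a * Y ^ b = X ^ γ * (X ^ (a-γ) * Y ^ b) := by rw [e1]; ring
    _ ≤ (Z/2) ^ γ * (Y ^ (a-γ) * Y ^ b) := by
        apply mul_le_mul h1 (mul_le_mul_of_nonneg_right h2 (Real.rpow_nonneg hY0.le _))
          (by positivity) (by positivity)
    _ = (Z/2) ^ γ * Y ^ (a + b - γ) := by rw [e2]
    _ ≤ _ := by
        have h5 : (0:ℝ) ≤ X ^ (a+b-γ) := Real.rpow_nonneg hX0.le _
        have h4 : (0:ℝ) ≤ (Z/2) ^ γ := Real.rpow_nonneg hZ2.le _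
        nlinarith
  · have hZY : Z / 2 ≤ Y := by rw [max_eq_right h] at hZb; linarith
    have h1 : Y ^ γ ≤ (Z/2) ^ γ := Real.rpow_le_rpow_of_nonpos hZ2 hZY hγ
    have h2 : Y ^ (b - γ) ≤ X ^ (b - γ) := Real.rpow_le_rpow_of_nonpos hX0 h hbγ
    have e1 : Y ^ b = Y ^ γ * Y ^ (b - γ) := by rw [← Real.rpow_add hY0]; ring_nf
    have e2 : X ^ (b - γ) * X ^ a = X ^ (a + b - γ) := by rw [← Real.rpow_add hX0]; ring_nf
    calc X ^ a * Y ^ b = Y ^ γ * (Y ^ (b-γ) * X ^ a) := by rw [e1]; ring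
    _ ≤ (Z/2) ^ γ * (X ^ (b-γ) * X ^ a) := by
        apply mul_le_mul h1 (mul_le_mul_of_nonneg_right h2 (Real.rpow_nonneg hX0.le _))
          (by positivity) (by positivity)
    _ = (Z/2) ^ γ * X ^ (a + b - γ) := by rw [e2]
    _ ≤ _ := by
        have h5 : (0:ℝ) ≤ Y ^ (a+b-γ) := Real.rpow_nonneg hY0.le _
        have h4 : (0:ℝ) ≤ (Z/2) ^ γ := Real.rpow_nonneg hZ2.le _
        nlinarith

lemma summable_int_aux {t : ℝ} (ht : t < -(1/2)) :
    Summable (fun z : ℤ => (1 + (z:ℝ)^2) ^ t) := by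
  have hb : (1:ℝ) < -(2*t) := by linarith
  have h0 : Summable (fun z : ℤ => |(z:ℝ)| ^ (-(-(2*t)))) := Real.summable_abs_int_rpow hb
  rw [show -(-(2*t)) = 2*t by ring] at h0
  apply (Finset.summable_compl_iff ({0} : Finset ℤ)).mp
  apply Summable.of_nonneg_of_le (fun z => Real.rpow_nonneg (by positivity) _) ?_ (h0.subtype _)
  rintro ⟨z, hz⟩
  have hz0 : (z:ℝ) ≠ 0 := by
    simp only [Finset.mem_singleton] at hz
    exact_mod_cast hz
  have h1 : (0:ℝ) < (z:ℝ)^2 := by positivity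
  calc (1 + (z:ℝ)^2) ^ t ≤ ((z:ℝ)^2) ^ t :=
        Real.rpow_le_rpow_of_nonpos h1 (by linarith) (by linarith)
  _ = |(z:ℝ)| ^ (2*t) := by
      rw [← sq_abs, ← Real.rpow_natCast |(z:ℝ)| 2, ← Real.rpow_mul (abs_nonneg _)]
      norm_num

lemma summable_pi_prod {g : ℤ → ℝ} (hg : ∀ z, 0 ≤ g z) (hs : Summable g) :
    ∀ n : ℕ, Summable (fun x : Fin n → ℤ => ∏ r, g (x r)) := by
  intro n
  induction n with
  | zero =>
    have : ∀ x : Fin 0 → ℤ, ∏ r, g (x r) = 1 := fun x => by simp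
    simp only [this]
    exact .of_finite
  | succ n IH =>
    have hf' : (0 : ℤ → ℝ) ≤ g := fun z => hg z
    have hg' : (0 : (Fin n → ℤ) → ℝ) ≤ fun x => ∏ r, g (x r) :=
      fun x => Finset.prod_nonneg fun r _ => hg _
    have h2 := Summable.mul_of_nonneg hs IH hf' hg'
    rw [← (Fin.consEquiv (fun _ : Fin (n+1) => ℤ)).summable_iff]
    apply h2.congr
    rintro ⟨z, w⟩
    simp [Fin.consEquiv, Fin.prod_univ_succ]

lemma summable_jb (hd : 1 ≤ d) {s : ℝ} (hs : s < -(d:ℝ)) :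
    Summable (fun x : Fin d → ℤ => jbracket x ^ s) := by
  have hd0 : (0:ℝ) < d := by exact_mod_cast hd
  set t := s / (2*d) with hts
  have hs0 : s < 0 := by linarith
  have ht : t < -(1/2) := by
    rw [hts, div_lt_iff₀ (by linarith)]; linarith
  have ht0 : t ≤ 0 := by linarith
  apply Summable.of_nonneg_of_le (fun x => Real.rpow_nonneg (jbracket_pos x).le _) ?_
    (summable_pi_prod (fun z => Real.rpow_nonneg (by positivity) _) (summable_int_aux ht) d)
  intro x
  set S := ∑ r, ((x r : ℝ))^2 with hS
  have hS0 : (0:ℝ) ≤ S := Finset.sum_nonneg fun _ _ => sq_nonneg _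
  have hP : ∏ r, (1 + ((x r:ℝ))^2) ≤ (1 + S) ^ (d:ℕ) := by
    calc ∏ r, (1 + ((x r:ℝ))^2) ≤ ∏ _r : Fin d, (1 + S) := by
          apply Finset.prod_le_prod (fun r _ => by positivity)
          intro r _
          have : ((x r:ℝ))^2 ≤ S := Finset.single_le_sum (f := fun r => ((x r:ℝ))^2)
            (fun _ _ => sq_nonneg _) (Finset.mem_univ r)
          linarith
    _ = (1 + S) ^ (d:ℕ) := by rw [Finset.prod_const, Finset.card_univ, Fintype.card_fin]
  have hP0 : (0:ℝ) < ∏ r, (1 + ((x r:ℝ))^2) := Finset.prod_pos fun r _ => by positivity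
  have key : ((1 + S) ^ (d:ℕ)) ^ t ≤ (∏ r, (1 + ((x r:ℝ))^2)) ^ t :=
    Real.rpow_le_rpow_of_nonpos hP0 hP ht0
  have e1 : ((1 + S) ^ (d:ℕ)) ^ t = jbracket x ^ s := by
    rw [← Real.rpow_natCast (1+S) d, ← Real.rpow_mul (by linarith), jbracket,
      ← Real.rpow_mul (by linarith)]
    congr 1
    rw [hts]
    field_simp
  have e2 : (∏ r, (1 + ((x r:ℝ))^2)) ^ t = ∏ r, (1 + ((x r:ℝ))^2) ^ t := by
    rw [← Real.finset_prod_rpow _ _ (fun r _ => by positivity)]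
  rw [e1, e2] at key
  exact key

noncomputable def G (d : ℕ) (s : ℝ) (x : Fin d → ℤ) : ℝ≥0∞ := ENNReal.ofReal (jbracket x ^ s)

lemma tsum_G_ne_top (hd : 1 ≤ d) {s : ℝ} (hs : s < -(d:ℝ)) :
    ∑' x : Fin d → ℤ, G d s x ≠ ⊤ := by
  simp only [G]
  rw [← ENNReal.ofReal_tsum_of_nonneg (fun x => Real.rpow_nonneg (jbracket_pos x).le _)
    (summable_jb hd hs)]
  exact ENNReal.ofReal_ne_top

lemma G_mono {s u : ℝ} (h : s ≤ u) (x : Fin d → ℤ) : G d s x ≤ G d u x :=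
  ENNReal.ofReal_le_ofReal (Real.rpow_le_rpow_of_exponent_le (one_le_jbracket x) h)

/-- The convolution estimate. -/
lemma conv (hd : 1 ≤ d) {a b γ : ℝ} (ha0 : a ≤ 0) (hb0 : b ≤ 0)
    (ha1 : -(d:ℝ) ≤ a) (hb1 : -(d:ℝ) ≤ b) (hγ : γ ≤ 0) (hgap : a + b + (d:ℝ) < γ) :
    ∃ K : ℝ≥0∞, K ≠ ⊤ ∧ ∀ m : Fin d → ℤ,
      ∑' q : Fin d → ℤ, G d a q * G d b (m - q) ≤ K * G d γ m := by
  have hc' : a + b - γ < -(d:ℝ) := by linarith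
  have hC : ∑' x : Fin d → ℤ, G d (a + b - γ) x ≠ ⊤ := tsum_G_ne_top hd hc'
  refine ⟨ENNReal.ofReal ((2:ℝ) ^ (-γ)) * (2 * ∑' x : Fin d → ℤ, G d (a + b - γ) x),
    ENNReal.mul_ne_top ENNReal.ofReal_ne_top (ENNReal.mul_ne_top (by simp) hC), fun m => ?_⟩
  have step1 : ∀ q : Fin d → ℤ, G d a q * G d b (m - q) ≤
      ENNReal.ofReal ((jbracket m / 2) ^ γ) * (G d (a+b-γ) q + G d (a+b-γ) (m - q)) := by
    intro q
    rw [G, G, G, G, ← ENNReal.ofReal_mul (Real.rpow_nonneg (jbracket_pos q).le _),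
      ← ENNReal.ofReal_add (Real.rpow_nonneg (jbracket_pos q).le _)
        (Real.rpow_nonneg (jbracket_pos _).le _),
      ← ENNReal.ofReal_mul (Real.rpow_nonneg (div_nonneg (jbracket_pos m).le (by norm_num)) _)]
    apply ENNReal.ofReal_le_ofReal
    exact point_ineq (one_le_jbracket q) (one_le_jbracket (m-q)) (jbracket_pos m)
      (jbracket_triangle q m) hγ (by linarith) (by linarith)
  calc ∑' q : Fin d → ℤ, G d a q * G d b (m - q)
      ≤ ∑' q : Fin d → ℤ, ENNReal.ofReal ((jbracket m / 2) ^ γ) *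
          (G d (a+b-γ) q + G d (a+b-γ) (m - q)) := ENNReal.tsum_le_tsum step1
  _ = ENNReal.ofReal ((jbracket m / 2) ^ γ) *
        ((∑' q : Fin d → ℤ, G d (a+b-γ) q) + ∑' q : Fin d → ℤ, G d (a+b-γ) (m - q)) := by
      rw [ENNReal.tsum_mul_left, ENNReal.tsum_add]
  _ = ENNReal.ofReal ((jbracket m / 2) ^ γ) * (2 * ∑' x : Fin d → ℤ, G d (a+b-γ) x) := by
      congr 1
      rw [show ∑' q : Fin d → ℤ, G d (a+b-γ) (m - q) = ∑' x : Fin d → ℤ, G d (a+b-γ) x from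
        (Equiv.subLeft m).tsum_eq (G d (a+b-γ))]
      ring
  _ = ENNReal.ofReal ((2:ℝ) ^ (-γ)) * (2 * ∑' x : Fin d → ℤ, G d (a + b - γ) x) * G d γ m := by
      rw [show (jbracket m / 2) ^ γ = (2:ℝ)^(-γ) * jbracket m ^ γ by
        rw [Real.div_rpow (jbracket_pos m).le (by norm_num), Real.rpow_neg (by norm_num)]
        field_simp]
      rw [ENNReal.ofReal_mul (by positivity), G]
      ring

/-- Row sum: sum over families of `n` lattice points with prescribed total. -/
noncomputable def R (d n : ℕ) (a : Fin n → ℝ) (m : Fin d → ℤ) : ℝ≥0∞ :=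
  ∑' v : Fin n → (Fin d → ℤ), if (∑ j, v j) = m then ∏ j, G d (a j) (v j) else 0

lemma R_one (a : Fin 1 → ℝ) (m : Fin d → ℤ) : R d 1 a m = G d (a 0) m := by
  rw [R, ← (Equiv.funUnique (Fin 1) (Fin d → ℤ)).symm.tsum_eq]
  have : ∀ x : Fin d → ℤ,
      (if (∑ j : Fin 1, (Equiv.funUnique (Fin 1) (Fin d → ℤ)).symm x j) = m then
        ∏ j : Fin 1, G d (a j) ((Equiv.funUnique (Fin 1) (Fin d → ℤ)).symm x j) else 0)
      = if x = m then G d (a 0) x else 0 := by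
    intro x
    simp [Equiv.funUnique, Fin.sum_univ_one, Fin.prod_univ_one]
  rw [tsum_congr this]
  rw [tsum_eq_single m (fun b hb => by simp [hb])]
  simp

lemma R_succ (n : ℕ) (a : Fin (n+1) → ℝ) (m : Fin d → ℤ) :
    R d (n+1) a m = ∑' q : Fin d → ℤ,
      G d (a (Fin.last n)) q * R d n (fun j => a j.castSucc) (m - q) := by
  rw [R, ← Equiv.tsum_eq (Fin.snocEquiv (fun _ : Fin (n+1) => (Fin d → ℤ)))]
  rw [ENNReal.tsum_prod']
  congr 1
  funext q
  rw [R, ← ENNReal.tsum_mul_left]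
  congr 1
  funext w
  have hsnoc : ∀ j : Fin n,
      Fin.snocEquiv (fun _ : Fin (n+1) => (Fin d → ℤ)) (q, w) j.castSucc = w j := by
    intro j; simp [Fin.snocEquiv]
  have hlast : Fin.snocEquiv (fun _ : Fin (n+1) => (Fin d → ℤ)) (q, w) (Fin.last n) = q := by
    simp [Fin.snocEquiv]
  rw [Fin.sum_univ_castSucc (f := fun j => Fin.snocEquiv (fun _ : Fin (n+1) => (Fin d → ℤ)) (q, w) j),
    Fin.prod_univ_castSucc (f := fun j => G d (a j) (Fin.snocEquiv (fun _ : Fin (n+1) => (Fin d → ℤ)) (q, w) j))]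
  simp only [hsnoc, hlast]
  have hcond : ((∑ j : Fin n, w j) + q = m) ↔ ((∑ j : Fin n, w j) = m - q) :=
    eq_sub_iff_add_eq.symm
  by_cases hc : (∑ j : Fin n, w j) = m - q
  · rw [if_pos (hcond.mpr hc), if_pos hc]; ring
  · rw [if_neg (fun h => hc (hcond.mp h)), if_neg hc, mul_zero]

lemma row_main (hd : 1 ≤ d) (ε : ℝ) (hε : 0 < ε) :
    ∀ (n : ℕ) (a : Fin (n+1) → ℝ), (∀ j, a j ≤ 0) → (∀ j, -(d:ℝ) ≤ a j) →
    ((∑ j, a j) + n * ((d:ℝ) + ε) ≤ 0) →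
    ∃ K : ℝ≥0∞, K ≠ ⊤ ∧ ∀ m, R d (n+1) a m ≤ K * G d ((∑ j, a j) + n * ((d:ℝ)+ε)) m := by
  intro n
  induction n with
  | zero =>
    intro a ha0 ha1 hθ
    refine ⟨1, ENNReal.one_ne_top, fun m => ?_⟩
    rw [R_one, one_mul]
    apply G_mono
    simp [Fin.sum_univ_one]
  | succ n IH =>
    intro a ha0 ha1 hθ
    set a' : Fin (n+1) → ℝ := fun j => a j.castSucc with ha'
    have hsplit : (∑ j, a j) = (∑ j, a' j) + a (Fin.last (n+1)) := Fin.sum_univ_castSucc a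
    have hlast0 : a (Fin.last (n+1)) ≤ 0 := ha0 _
    have hlast1 : -(d:ℝ) ≤ a (Fin.last (n+1)) := ha1 _
    have hcast : ((n+1 : ℕ) : ℝ) = (n : ℝ) + 1 := by push_cast; ring
    have hθ' : (∑ j, a' j) + n * ((d:ℝ) + ε) ≤ 0 := by
      rw [hsplit, hcast] at hθ; linarith
    obtain ⟨K', hK', hRb⟩ := IH a' (fun j => ha0 _) (fun j => ha1 _) hθ'
    have hθ'lb : -(d:ℝ) ≤ (∑ j, a' j) + n * ((d:ℝ) + ε) := by
      have h1 : 0 ≤ ∑ j : Fin (n+1), (a' j + (d:ℝ)) :=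
        Finset.sum_nonneg fun j _ => by have := ha1 j.castSucc; rw [ha']; linarith
      have h2 : ∑ j : Fin (n+1), (a' j + (d:ℝ)) = (∑ j, a' j) + (n+1) * (d:ℝ) := by
        rw [Finset.sum_add_distrib, Finset.sum_const, Finset.card_univ, Fintype.card_fin,
          nsmul_eq_mul]
        push_cast; ring
      rw [h2] at h1
      have hd0 : (0:ℝ) ≤ d := Nat.cast_nonneg d
      nlinarith
    obtain ⟨Kc, hKc, hconv⟩ := conv hd (a := a (Fin.last (n+1)))
      (b := (∑ j, a' j) + n * ((d:ℝ) + ε))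
      (γ := (∑ j, a j) + ((n+1:ℕ) : ℝ) * ((d:ℝ) + ε))
      hlast0 hθ' hlast1 hθ'lb hθ (by rw [hsplit, hcast]; linarith)
    refine ⟨K' * Kc, ENNReal.mul_ne_top hK' hKc, fun m => ?_⟩
    rw [R_succ]
    calc ∑' q : Fin d → ℤ, G d (a (Fin.last (n+1))) q * R d (n+1) a' (m - q)
        ≤ ∑' q : Fin d → ℤ, G d (a (Fin.last (n+1))) q *
            (K' * G d ((∑ j, a' j) + n * ((d:ℝ)+ε)) (m - q)) :=
          ENNReal.tsum_le_tsum fun q => mul_le_mul_right (hRb _) _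
    _ = K' * ∑' q : Fin d → ℤ, G d (a (Fin.last (n+1))) q *
            G d ((∑ j, a' j) + n * ((d:ℝ)+ε)) (m - q) := by
        rw [← ENNReal.tsum_mul_left]
        congr 1; funext q; ring
    _ ≤ K' * (Kc * G d ((∑ j, a j) + ((n+1:ℕ):ℝ) * ((d:ℝ)+ε)) m) :=
        mul_le_mul_right (hconv m) _
    _ = K' * Kc * G d ((∑ j, a j) + ((n+1:ℕ):ℝ) * ((d:ℝ)+ε)) m := by ring

lemma row_main' (hd : 1 ≤ d) (ε : ℝ) (hε : 0 < ε) (N : ℕ) (hN : 1 ≤ N)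
    (a : Fin N → ℝ) (ha0 : ∀ j, a j ≤ 0) (ha1 : ∀ j, -(d:ℝ) ≤ a j)
    (hθ : (∑ j, a j) + ((N:ℝ) - 1) * ((d:ℝ) + ε) ≤ 0) :
    ∃ K : ℝ≥0∞, K ≠ ⊤ ∧ ∀ m, R d N a m ≤ K * G d ((∑ j, a j) + ((N:ℝ)-1) * ((d:ℝ)+ε)) m := by
  obtain ⟨n, rfl⟩ : ∃ n, N = n + 1 := ⟨N-1, by omega⟩
  have hN' : ((n+1:ℕ):ℝ) - 1 = (n:ℝ) := by push_cast; ring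
  rw [hN'] at hθ ⊢
  exact row_main hd ε hε n a ha0 ha1 hθ

lemma tsum_pi_prod : ∀ (n : ℕ) (β : Fin n → Type) (f : ∀ i, β i → ℝ≥0∞),
    (∑' v : (∀ i, β i), ∏ i, f i (v i)) = ∏ i, ∑' x, f i x := by
  intro n
  induction n with
  | zero =>
    intro β f
    simp only [Finset.univ_eq_empty, Finset.prod_empty]
    rw [tsum_eq_single (fun i => i.elim0) (fun b hb => absurd (Subsingleton.elim b _) hb)]
  | succ n IH =>
    intro β f
    rw [← Equiv.tsum_eq (Fin.consEquiv β), ENNReal.tsum_prod']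
    have : ∀ (x : β 0) (w : ∀ i : Fin n, β i.succ),
        (∏ i, f i (Fin.consEquiv β (x, w) i)) = f 0 x * ∏ i : Fin n, f i.succ (w i) := by
      intro x w
      rw [Fin.prod_univ_succ]
      simp [Fin.consEquiv]
    simp only [this]
    rw [tsum_congr (fun x => ENNReal.tsum_mul_left), ENNReal.tsum_mul_right,
      IH (fun i => β i.succ) (fun i => f i.succ), Fin.prod_univ_succ]

lemma prod_G {ι : Type*} [Fintype ι] (θ : ι → ℝ) (m : Fin d → ℤ) :
    ∏ i, G d (θ i) m = G d (∑ i, θ i) m := by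
  simp only [G]
  rw [Real.rpow_sum_of_pos (jbracket_pos m) θ Finset.univ,
    ENNReal.ofReal_prod_of_nonneg (fun i _ => Real.rpow_nonneg (jbracket_pos m).le _)]

end LoopAux

open LoopAux in
/-- Loop lemma: with exponents `α_{ij} ∈ (-d, 0]` satisfying `∑_j (α_{ij}+d) < d` for each `i`
and `∑_i α_i < -d` where `α_i = (k_i-1)d + ∑_j α_{ij}`, the sum over all families
`p ∈ (ℤ^d)^K` with equal row sums of `∏ ⟨p_{ij}⟩^{α_{ij}}` is finite. -/
theorem loop_lemma (d : ℕ) (hd : 1 ≤ d) (ℓ : ℕ) (hℓ : 2 ≤ ℓ)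
    (k : Fin ℓ → ℕ) (hk : ∀ i, 1 ≤ k i)
    (α : (Σ i : Fin ℓ, Fin (k i)) → ℝ)
    (hα0 : ∀ s, α s ≤ 0)
    (hα1 : ∀ s, -(d : ℝ) < α s)
    (hα2 : ∀ i : Fin ℓ, ∑ j : Fin (k i), (α ⟨i, j⟩ + d) < d)
    (hα3 : ∑ i : Fin ℓ, (((k i : ℝ) - 1) * d + ∑ j : Fin (k i), α ⟨i, j⟩) < -(d : ℝ)) :
    Summable (fun p : {p : (Σ i : Fin ℓ, Fin (k i)) → (Fin d → ℤ) //
        ∀ i i' : Fin ℓ, (∑ j : Fin (k i), p ⟨i, j⟩) = ∑ j : Fin (k i'), p ⟨i', j⟩} =>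
      ∏ s : Σ i : Fin ℓ, Fin (k i), jbracket (p.1 s) ^ α s) := by
  classical
  have hne : (Finset.univ : Finset (Fin ℓ)).Nonempty := ⟨⟨0, by omega⟩, Finset.mem_univ _⟩
  set A : Fin ℓ → ℝ := fun i => (∑ j : Fin (k i), α ⟨i,j⟩) + ((k i : ℝ) - 1) * d with hA
  have hAneg : ∀ i, A i < 0 := by
    intro i
    have h2 := hα2 i
    have hsum : ∑ j : Fin (k i), (α ⟨i,j⟩ + (d:ℝ)) =
        (∑ j : Fin (k i), α ⟨i,j⟩) + (k i : ℝ) * d := by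
      rw [Finset.sum_add_distrib, Finset.sum_const, Finset.card_univ, Fintype.card_fin,
        nsmul_eq_mul]
    rw [hsum] at h2
    rw [hA]; dsimp only; linarith
  have hB : ∑ i, A i < -(d:ℝ) := by
    calc ∑ i, A i = ∑ i, (((k i:ℝ)-1)*d + ∑ j : Fin (k i), α ⟨i,j⟩) :=
          Finset.sum_congr rfl fun i _ => by rw [hA]; ring
    _ < _ := hα3
  set M := ∑ i, (k i : ℝ) with hM
  have hMk : ∀ i, (k i : ℝ) ≤ M :=
    fun i => Finset.single_le_sum (f := fun i : Fin ℓ => (k i : ℝ)) (fun i _ => by positivity) (Finset.mem_univ i)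
  have hM0 : (0:ℝ) ≤ M := Finset.sum_nonneg fun i _ => by positivity
  set c := Finset.univ.inf' hne (fun i => -A i) with hc
  have hc0 : 0 < c := (Finset.lt_inf'_iff hne).mpr (fun i _ => by linarith [hAneg i])
  have hcle : ∀ i, c ≤ -A i := fun i => Finset.inf'_le _ (Finset.mem_univ i)
  set ε := min c (-(d:ℝ) - (∑ i, A i)) / (M + 1) with hεdef
  have hM1 : (0:ℝ) < M + 1 := by linarith
  have hεpos : 0 < ε := div_pos (lt_min hc0 (by linarith)) hM1
  have hεM : (M+1) * ε = min c (-(d:ℝ) - ∑ i, A i) := by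
    rw [hεdef]; field_simp
  set θ : Fin ℓ → ℝ := fun i => (∑ j : Fin (k i), α ⟨i,j⟩) + ((k i:ℝ) - 1) * ((d:ℝ) + ε)
    with hθdef
  have hθA : ∀ i, θ i = A i + ((k i:ℝ)-1) * ε := fun i => by rw [hθdef, hA]; dsimp only; ring
  have hk1 : ∀ i, (1:ℝ) ≤ (k i : ℝ) := fun i => by exact_mod_cast hk i
  have hθ0 : ∀ i, θ i ≤ 0 := by
    intro i
    rw [hθA]
    have h1 : ((k i:ℝ)-1) * ε ≤ (M+1) * ε := by
      apply mul_le_mul_of_nonneg_right _ hεpos.le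
      linarith [hMk i]
    have h2 := hcle i
    have h3 := min_le_left c (-(d:ℝ) - ∑ i, A i)
    linarith [hεM]
  have hθsum : ∑ i, θ i < -(d:ℝ) := by
    have h1 : ∑ i, θ i = (∑ i, A i) + (∑ i, ((k i:ℝ)-1)) * ε := by
      rw [Finset.sum_congr rfl fun i _ => hθA i, Finset.sum_add_distrib, ← Finset.sum_mul]
    have h2 : ∑ i, ((k i:ℝ)-1) ≤ M := by
      rw [hM]; apply Finset.sum_le_sum; intro i _; linarith
    have h3 : 0 ≤ ∑ i, ((k i:ℝ)-1) := Finset.sum_nonneg fun i _ => by linarith [hk1 i]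
    have h4 : (∑ i, ((k i:ℝ)-1)) * ε ≤ M * ε := mul_le_mul_of_nonneg_right h2 hεpos.le
    have h5 : M * ε < (M+1) * ε := by nlinarith
    have h6 := min_le_right c (-(d:ℝ) - ∑ i, A i)
    rw [h1]; linarith [hεM]
  -- per-row bounds
  have hrow : ∀ i : Fin ℓ, ∃ K : ℝ≥0∞, K ≠ ⊤ ∧ ∀ m,
      R d (k i) (fun j => α ⟨i,j⟩) m ≤ K * G d (θ i) m := by
    intro i
    have h := row_main' (d := d) hd ε hεpos (k i) (hk i) (fun j => α ⟨i,j⟩)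
      (fun j => hα0 _) (fun j => (hα1 _).le) (hθ0 i)
    exact h
  choose K hKtop hKb using hrow
  -- the ENNReal-valued target
  set F : {p : (Σ i : Fin ℓ, Fin (k i)) → (Fin d → ℤ) //
      ∀ i i' : Fin ℓ, (∑ j : Fin (k i), p ⟨i, j⟩) = ∑ j : Fin (k i'), p ⟨i', j⟩} → ℝ≥0∞ :=
    fun p => ∏ s : (Σ i : Fin ℓ, Fin (k i)), G d (α s) (p.1 s) with hF
  have i₀ : Fin ℓ := ⟨0, by omega⟩
  set Ψ : {p : (Σ i : Fin ℓ, Fin (k i)) → (Fin d → ℤ) //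
      ∀ i i' : Fin ℓ, (∑ j : Fin (k i), p ⟨i, j⟩) = ∑ j : Fin (k i'), p ⟨i', j⟩} →
      (Fin d → ℤ) × (∀ i : Fin ℓ, Fin (k i) → (Fin d → ℤ)) :=
    fun p => (∑ j : Fin (k i₀), p.1 ⟨i₀, j⟩, fun i j => p.1 ⟨i, j⟩) with hΨ
  set g : (Fin d → ℤ) × (∀ i : Fin ℓ, Fin (k i) → (Fin d → ℤ)) → ℝ≥0∞ :=
    fun t => ∏ i, (if (∑ j, t.2 i j) = t.1 then ∏ j, G d (α ⟨i,j⟩) (t.2 i j) else 0) with hg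
  have hinj : Function.Injective Ψ := by
    intro p q h
    apply Subtype.ext
    funext s
    have h2 := congrArg Prod.snd h
    simp only [hΨ] at h2
    exact congrFun (congrFun h2 s.1) s.2
  have hFg : ∀ p, F p = g (Ψ p) := by
    intro p
    have h1 : g (Ψ p) = ∏ i, ∏ j, G d (α ⟨i,j⟩) (p.1 ⟨i,j⟩) := by
      apply Finset.prod_congr rfl
      intro i _
      simp only [hΨ, hg]
      rw [if_pos (p.2 i i₀)]
    rw [hF, h1]
    dsimp only
    rw [← Finset.univ_sigma_univ, Finset.prod_sigma]
  have hle : ∑' p, F p ≤ ∑' t, g t := by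
    calc ∑' p, F p = ∑' p, g (Ψ p) := tsum_congr hFg
    _ ≤ ∑' t, g t := ENNReal.tsum_comp_le_tsum_of_injective hinj g
  have hfact : ∑' t, g t = ∑' m : Fin d → ℤ, ∏ i, R d (k i) (fun j => α ⟨i,j⟩) m := by
    rw [ENNReal.tsum_prod']
    apply tsum_congr; intro m
    exact tsum_pi_prod ℓ (fun i => Fin (k i) → (Fin d → ℤ))
      (fun i w => if (∑ j, w j) = m then ∏ j, G d (α ⟨i,j⟩) (w j) else 0)
  have hbound2 : ∑' m : Fin d → ℤ, ∏ i, R d (k i) (fun j => α ⟨i,j⟩) m ≤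
      (∏ i, K i) * ∑' m : Fin d → ℤ, G d (∑ i, θ i) m := by
    calc ∑' m : Fin d → ℤ, ∏ i, R d (k i) (fun j => α ⟨i,j⟩) m
        ≤ ∑' m : Fin d → ℤ, ∏ i, (K i * G d (θ i) m) :=
          ENNReal.tsum_le_tsum fun m => Finset.prod_le_prod' fun i _ => hKb i m
    _ = ∑' m : Fin d → ℤ, (∏ i, K i) * G d (∑ i, θ i) m := by
        apply tsum_congr; intro m
        rw [Finset.prod_mul_distrib, prod_G]
    _ = (∏ i, K i) * ∑' m : Fin d → ℤ, G d (∑ i, θ i) m := ENNReal.tsum_mul_left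
  have hProd : (∏ i, K i) ≠ ⊤ := by
    refine (ENNReal.prod_lt_top ?_).ne
    intro i _
    exact (hKtop i).lt_top
  have hfin : ∑' p, F p ≠ ⊤ :=
    ne_top_of_le_ne_top (ENNReal.mul_ne_top hProd (tsum_G_ne_top hd hθsum))
      (le_trans hle (le_of_eq_of_le hfact hbound2))
  apply (ENNReal.summable_toReal hfin).congr
  intro p
  rw [hF]
  dsimp only
  rw [ENNReal.toReal_prod]
  exact Finset.prod_congr rfl fun s _ =>
    ENNReal.toReal_ofReal (Real.rpow_nonneg (jbracket_pos _).le _)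
end

section
/- Fix k ∈ ℕ, σ ≥ 0, d ≥ 1, m, n₀, n₁,…,n_k ∈ ℝ with (σ-d)/2 - m - n_i < 0 for all i and A + (d+σ)/2 > 0, A + (d+σ)/2 > n₀ - m, where A = (1/2)∑_{i=1}^k(σ - d - 2m - 2n_i). For α ∈ ℝ set δ(α) = n₀ + α - σ + ∑_{i=1}^k (2m + n_i + α + d - σ), and define c_N := ∑_{l₁,…,l_k ∈ ℤ^d, |l_i| ≤ N} [⟨l₁+⋯+l_k⟩^{α+n₀} / (∑_{i=1}^k ⟨l_i⟩^σ + ⟨l₁+⋯+l_k⟩^σ)] ∏_{i=1}^k ⟨l_i⟩^{α+n_i+2m-σ}. Then c_N ≳ N^{δ(α)} when δ(α) > 0, and c_N ≳ log N when δ(α) = 0. -/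
/-- The finite set of frequencies `l ∈ ℤ^d` with `|l| ≤ N`. -/
noncomputable def freqBox (d N : ℕ) : Finset (Fin d → ℤ) :=
  (Finset.Icc (fun _ => -(N : ℤ)) (fun _ => (N : ℤ))).filter
    (fun l => (∑ r, (l r) ^ 2) ≤ (N : ℤ) ^ 2)

/-- The renormalisation constant
`c_N = ∑_{|lᵢ|≤N} ⟨l₁+⋯+l_k⟩^{α+n₀} / (∑ᵢ⟨lᵢ⟩^σ + ⟨l₁+⋯+l_k⟩^σ) ∏ᵢ ⟨lᵢ⟩^{α+nᵢ+2m-σ}`. -/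
noncomputable def renormConst (d k : ℕ) (σ m n₀ : ℝ) (n : Fin k → ℝ) (α : ℝ) (N : ℕ) : ℝ :=
  ∑ l ∈ Fintype.piFinset (fun _ : Fin k => freqBox d N),
    jbracket (∑ i, l i) ^ (α + n₀) /
        ((∑ i, jbracket (l i) ^ σ) + jbracket (∑ i, l i) ^ σ) *
      ∏ i, jbracket (l i) ^ (α + n i + 2 * m - σ)

noncomputable def rterm (d k : ℕ) (σ m n₀ : ℝ) (n : Fin k → ℝ) (α : ℝ)
    (l : Fin k → Fin d → ℤ) : ℝ :=
  jbracket (∑ i, l i) ^ (α + n₀) /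
      ((∑ i, jbracket (l i) ^ σ) + jbracket (∑ i, l i) ^ σ) *
    ∏ i, jbracket (l i) ^ (α + n i + 2 * m - σ)

lemma jbracket_pos {d : ℕ} (l : Fin d → ℤ) : 0 < jbracket l := by
  unfold jbracket; apply Real.rpow_pos_of_pos; positivity

lemma jbracket_zero {d : ℕ} : jbracket (0 : Fin d → ℤ) = 1 := by
  simp [jbracket]

lemma rterm_nonneg (d k : ℕ) (σ m n₀ : ℝ) (n : Fin k → ℝ) (α : ℝ)
    (l : Fin k → Fin d → ℤ) : 0 ≤ rterm d k σ m n₀ n α l := by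
  unfold rterm
  have h1 : ∀ (l' : Fin d → ℤ) (e : ℝ), (0:ℝ) ≤ jbracket l' ^ e :=
    fun l' e => (Real.rpow_pos_of_pos (jbracket_pos _) _).le
  refine mul_nonneg (div_nonneg (h1 _ _) ?_) (Finset.prod_nonneg fun i _ => h1 _ _)
  exact add_nonneg (Finset.sum_nonneg fun i _ => h1 _ _) (h1 _ _)

lemma rterm_zero (d k : ℕ) (σ m n₀ : ℝ) (n : Fin k → ℝ) (α : ℝ) :
    rterm d k σ m n₀ n α 0 = 1 / (k + 1) := by
  unfold rterm
  have h0 : (∑ i : Fin k, (0 : Fin k → Fin d → ℤ) i) = 0 := by simp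
  simp [h0, jbracket_zero, Real.one_rpow]

lemma zero_mem_freqBox (d N : ℕ) (hN : 1 ≤ N) : (0 : Fin d → ℤ) ∈ freqBox d N := by
  unfold freqBox
  simp only [Finset.mem_filter, Finset.mem_Icc]
  refine ⟨⟨?_, ?_⟩, by simp⟩ <;> intro r <;> simp <;> positivity


lemma jbracket_eq_sqrt {d : ℕ} (l : Fin d → ℤ) :
    jbracket l = Real.sqrt (1 + ∑ r, ((l r : ℝ)) ^ 2) := by
  rw [jbracket, Real.sqrt_eq_rpow]

/-- If all coordinates of `l` lie in `[b, 2b-1]` with `b ≥ 1`, then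
`b ≤ ⟨l⟩ ≤ √(5d)·b`. -/
lemma jbracket_shell {d : ℕ} (hd : 1 ≤ d) {l : Fin d → ℤ} {b : ℤ} (hb : 1 ≤ b)
    (h : ∀ r, b ≤ l r ∧ l r ≤ 2 * b - 1) :
    (b : ℝ) ≤ jbracket l ∧ jbracket l ≤ Real.sqrt (5 * d) * b := by
  have hb' : (1:ℝ) ≤ (b:ℝ) := by exact_mod_cast hb
  have hcoord : ∀ r, (b:ℝ)^2 ≤ ((l r : ℝ))^2 ∧ ((l r : ℝ))^2 ≤ (2*b:ℝ)^2 := by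
    intro r
    have h1 : (b:ℝ) ≤ (l r : ℝ) := by exact_mod_cast (h r).1
    have h2 : (l r : ℝ) ≤ 2*(b:ℝ) - 1 := by exact_mod_cast (h r).2
    constructor <;> nlinarith
  have hlb : (b:ℝ)^2 ≤ 1 + ∑ r, ((l r : ℝ))^2 := by
    have r0 : Fin d := ⟨0, hd⟩
    have h1 : (b:ℝ)^2 ≤ ((l r0 : ℝ))^2 := (hcoord r0).1
    have h2 : ((l r0 : ℝ))^2 ≤ ∑ r, ((l r : ℝ))^2 :=
      Finset.single_le_sum (f := fun r => ((l r : ℝ))^2) (fun r _ => sq_nonneg _) (Finset.mem_univ r0)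
    linarith
  have hub : 1 + ∑ r, ((l r : ℝ))^2 ≤ 5 * d * (b:ℝ)^2 := by
    have h2 : ∑ r, ((l r : ℝ))^2 ≤ (d:ℝ) * (2*b:ℝ)^2 := by
      calc ∑ r, ((l r : ℝ))^2 ≤ ∑ _r : Fin d, (2*(b:ℝ))^2 :=
            Finset.sum_le_sum (fun r _ => by simpa using (hcoord r).2)
        _ = (d:ℝ) * (2*b:ℝ)^2 := by simp [mul_comm]
    have hd' : (1:ℝ) ≤ (d:ℝ) := by exact_mod_cast hd
    nlinarith
  rw [jbracket_eq_sqrt]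
  constructor
  · have := Real.sqrt_le_sqrt hlb
    rwa [Real.sqrt_sq (by linarith)] at this
  · have h1 := Real.sqrt_le_sqrt hub
    have h2 : Real.sqrt (5 * d * (b:ℝ)^2) = Real.sqrt (5*d) * b := by
      rw [Real.sqrt_mul (by positivity), Real.sqrt_sq (by linarith)]
    linarith [h1, h2 ▸ h1]

lemma rpow_bracket_lb {a K x e : ℝ} (ha : 1 ≤ a) (hK : 1 ≤ K) (h1 : a ≤ x) (h2 : x ≤ K * a) :
    K ^ (-|e|) * a ^ e ≤ x ^ e := by
  have ha0 : (0:ℝ) < a := lt_of_lt_of_le one_pos ha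
  have hK0 : (0:ℝ) < K := lt_of_lt_of_le one_pos hK
  have hx0 : (0:ℝ) < x := lt_of_lt_of_le ha0 h1
  rcases le_or_gt 0 e with he | he
  · rw [abs_of_nonneg he]
    have hK1 : K ^ (-e) ≤ 1 :=
      Real.rpow_le_one_of_one_le_of_nonpos hK (by linarith)
    have hax : a ^ e ≤ x ^ e := Real.rpow_le_rpow ha0.le h1 he
    calc K ^ (-e) * a ^ e ≤ 1 * (a ^ e) :=
          mul_le_mul_of_nonneg_right hK1 (Real.rpow_nonneg ha0.le _)
      _ = a ^ e := one_mul _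
      _ ≤ x ^ e := hax
  · rw [abs_of_neg he, neg_neg]
    have : K ^ e * a ^ e = (K * a) ^ e := (Real.mul_rpow hK0.le ha0.le).symm
    rw [this]
    exact Real.rpow_le_rpow_of_nonpos hx0 h2 he.le


noncomputable def shellBox (d a : ℕ) : Finset (Fin d → ℤ) :=
  Finset.Icc (fun _ => (a : ℤ)) (fun _ => 2 * a - 1)

lemma mem_shellBox {d a : ℕ} {l : Fin d → ℤ} :
    l ∈ shellBox d a ↔ ∀ r, (a : ℤ) ≤ l r ∧ l r ≤ 2 * a - 1 := by
  simp [shellBox, Finset.mem_Icc, Pi.le_def, forall_and]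

lemma card_shellBox (d a : ℕ) : (shellBox d a).card = a ^ d := by
  rw [shellBox, Pi.card_Icc]
  simp [Int.card_Icc]
  congr 1
  omega

lemma shellBox_subset (d a N : ℕ) (ha : 1 ≤ a) (hN : 4 * a ^ 2 * d ≤ N ^ 2) (hd : 1 ≤ d) :
    shellBox d a ⊆ freqBox d N := by
  intro l hl
  rw [mem_shellBox] at hl
  have h2a : (2 * a : ℤ) ≤ N := by
    have h1 : ((2 * a : ℤ)) ^ 2 ≤ (N : ℤ) ^ 2 := by push_cast at hN ⊢; nlinarith
    nlinarith [sq_nonneg ((2*(a:ℤ)) - N), sq_nonneg ((2*(a:ℤ)) + N)]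
  unfold freqBox
  simp only [Finset.mem_filter, Finset.mem_Icc, Pi.le_def]
  refine ⟨⟨fun r => ?_, fun r => ?_⟩, ?_⟩
  · have h1 := (hl r).1; have h2 : (0:ℤ) ≤ (a:ℤ) := Int.natCast_nonneg a; omega
  · have := (hl r).2; omega
  · calc (∑ r, (l r) ^ 2) ≤ ∑ _r : Fin d, (2 * a : ℤ) ^ 2 := by
          apply Finset.sum_le_sum
          intro r _
          have h1 := (hl r).1; have h2 := (hl r).2
          nlinarith
      _ = d * (2 * a : ℤ) ^ 2 := by simp [mul_comm]
      _ ≤ (N : ℤ) ^ 2 := by push_cast at hN ⊢; nlinarith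

lemma shell_term_lb (d k : ℕ) (hd : 1 ≤ d) (hk : 1 ≤ k) (σ m n₀ : ℝ) (hσ : 0 ≤ σ)
    (n : Fin k → ℝ) (α : ℝ) (a : ℕ) (ha : 1 ≤ a)
    (l : Fin k → Fin d → ℤ) (hl : ∀ i, l i ∈ shellBox d a) :
    (Real.sqrt (5*d)*k) ^ (-|α + n₀|) *
        (∏ i, (Real.sqrt (5*d)*k) ^ (-|α + n i + 2*m - σ|)) /
        ((k+1) * (Real.sqrt (5*d)*k) ^ σ) *
        (a:ℝ) ^ (α + n₀ - σ + ∑ i, (α + n i + 2*m - σ))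
    ≤ rterm d k σ m n₀ n α l := by
  set K : ℝ := Real.sqrt (5*d) * k with hKdef
  have ha0 : (0:ℝ) < (a:ℝ) := by exact_mod_cast ha
  have ha1 : (1:ℝ) ≤ (a:ℝ) := by exact_mod_cast ha
  have hs5 : (1:ℝ) ≤ Real.sqrt (5*d) := by
    rw [show (1:ℝ) = Real.sqrt 1 by simp]
    apply Real.sqrt_le_sqrt
    have : (1:ℝ) ≤ (d:ℝ) := by exact_mod_cast hd
    linarith
  have hk1 : (1:ℝ) ≤ (k:ℝ) := by exact_mod_cast hk
  have hK1 : (1:ℝ) ≤ K := by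
    calc (1:ℝ) = 1 * 1 := by ring
      _ ≤ Real.sqrt (5*d) * k := by apply mul_le_mul hs5 hk1 zero_le_one (by linarith)
  have hK0 : (0:ℝ) < K := lt_of_lt_of_le one_pos hK1
  -- bracket bounds on each component
  have hcomp : ∀ i, (a:ℝ) ≤ jbracket (l i) ∧ jbracket (l i) ≤ K * a := by
    intro i
    have h := jbracket_shell hd (b := (a:ℤ)) (by exact_mod_cast ha) (mem_shellBox.mp (hl i))
    refine ⟨h.1, le_trans h.2 ?_⟩
    rw [hKdef]
    have : Real.sqrt (5*d) * (a:ℝ) ≤ Real.sqrt (5*d) * k * a := by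
      rw [mul_assoc]
      apply mul_le_mul_of_nonneg_left _ (by linarith)
      nlinarith
    exact this
  -- bracket bounds on the sum
  have hsum : (a:ℝ) ≤ jbracket (∑ i, l i) ∧ jbracket (∑ i, l i) ≤ K * a := by
    have hb : (1:ℤ) ≤ (k:ℤ) * (a:ℤ) := by
      have : (1:ℤ) ≤ (k:ℤ) := by exact_mod_cast hk
      have : (1:ℤ) ≤ (a:ℤ) := by exact_mod_cast ha
      nlinarith [show (1:ℤ) ≤ (k:ℤ) from by exact_mod_cast hk]
    have hcoords : ∀ r, (k:ℤ)*(a:ℤ) ≤ (∑ i, l i) r ∧ (∑ i, l i) r ≤ 2*((k:ℤ)*(a:ℤ)) - 1 := by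
      intro r
      have happ : (∑ i, l i) r = ∑ i, l i r := by
        simp [Finset.sum_apply]
      rw [happ]
      constructor
      · calc (k:ℤ)*(a:ℤ) = ∑ _i : Fin k, (a:ℤ) := by simp [mul_comm]
          _ ≤ ∑ i, l i r := Finset.sum_le_sum fun i _ => (mem_shellBox.mp (hl i) r).1
      · calc ∑ i, l i r ≤ ∑ _i : Fin k, (2*(a:ℤ) - 1) :=
              Finset.sum_le_sum fun i _ => (mem_shellBox.mp (hl i) r).2
          _ = (k:ℤ) * (2*(a:ℤ) - 1) := by simp [mul_comm]; ring
          _ ≤ 2*((k:ℤ)*(a:ℤ)) - 1 := by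
              have : (1:ℤ) ≤ (k:ℤ) := by exact_mod_cast hk
              nlinarith
    have h := jbracket_shell hd hb hcoords
    constructor
    · refine le_trans ?_ h.1
      push_cast
      nlinarith
    · refine le_trans h.2 ?_
      push_cast
      rw [hKdef]
      ring_nf
      nlinarith [Real.sqrt_nonneg (5*(d:ℝ))]
  -- abbreviations
  set E : ℝ := α + n₀ with hE
  set e : Fin k → ℝ := fun i => α + n i + 2*m - σ with he
  have hnum : K ^ (-|E|) * (a:ℝ) ^ E ≤ jbracket (∑ i, l i) ^ E :=
    rpow_bracket_lb ha1 hK1 hsum.1 hsum.2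
  have hKa : (0:ℝ) < K * a := by positivity
  have hden : ((∑ i, jbracket (l i) ^ σ) + jbracket (∑ i, l i) ^ σ)
      ≤ ((k:ℝ)+1) * (K*(a:ℝ)) ^ σ := by
    have h1 : ∀ i : Fin k, jbracket (l i) ^ σ ≤ (K*(a:ℝ)) ^ σ := fun i =>
      Real.rpow_le_rpow (jbracket_pos _).le (hcomp i).2 hσ
    have h2 : jbracket (∑ i, l i) ^ σ ≤ (K*(a:ℝ)) ^ σ :=
      Real.rpow_le_rpow (jbracket_pos _).le hsum.2 hσ
    calc (∑ i, jbracket (l i) ^ σ) + jbracket (∑ i, l i) ^ σ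
        ≤ (∑ _i : Fin k, (K*(a:ℝ)) ^ σ) + (K*(a:ℝ)) ^ σ := by
          exact add_le_add (Finset.sum_le_sum fun i _ => h1 i) h2
      _ = ((k:ℝ)+1) * (K*(a:ℝ)) ^ σ := by simp; ring
  have hden0 : (0:ℝ) < (∑ i, jbracket (l i) ^ σ) + jbracket (∑ i, l i) ^ σ := by
    have : (0:ℝ) < jbracket (∑ i, l i) ^ σ := Real.rpow_pos_of_pos (jbracket_pos _) _
    have h2 : (0:ℝ) ≤ ∑ i, jbracket (l i) ^ σ :=
      Finset.sum_nonneg fun i _ => (Real.rpow_pos_of_pos (jbracket_pos _) _).le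
    linarith
  have hprod : (∏ i, K ^ (-|e i|) * (a:ℝ) ^ (e i)) ≤ ∏ i, jbracket (l i) ^ (e i) := by
    apply Finset.prod_le_prod
    · intro i _; positivity
    · intro i _; exact rpow_bracket_lb ha1 hK1 (hcomp i).1 (hcomp i).2
  have hstep : K ^ (-|E|) * (a:ℝ) ^ E / (((k:ℝ)+1) * (K*(a:ℝ)) ^ σ) *
      (∏ i, K ^ (-|e i|) * (a:ℝ) ^ (e i)) ≤ rterm d k σ m n₀ n α l := by
    unfold rterm
    apply mul_le_mul
    · apply div_le_div₀ (Real.rpow_pos_of_pos (jbracket_pos _) _).le hnum hden0 hden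
    · exact hprod
    · apply Finset.prod_nonneg; intro i _; positivity
    · exact div_nonneg (Real.rpow_pos_of_pos (jbracket_pos _) _).le hden0.le
  refine le_trans (le_of_eq ?_) hstep
  -- algebraic identity
  have hPsplit : (∏ i, K ^ (-|e i|) * (a:ℝ) ^ (e i))
      = (∏ i, K ^ (-|e i|)) * (a:ℝ) ^ (∑ i, e i) := by
    rw [Finset.prod_mul_distrib, Real.rpow_sum_of_pos ha0]
  have hKa' : (K*(a:ℝ)) ^ σ = K ^ σ * (a:ℝ) ^ σ := Real.mul_rpow hK0.le ha0.le
  have haexp : (a:ℝ) ^ (E - σ + ∑ i, e i)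
      = (a:ℝ) ^ E / (a:ℝ) ^ σ * (a:ℝ) ^ (∑ i, e i) := by
    rw [Real.rpow_add ha0, Real.rpow_sub ha0]
  have hgoal : α + n₀ - σ + ∑ i, (α + n i + 2*m - σ) = E - σ + ∑ i, e i := by
    rw [hE, he]
  rw [hgoal, haexp, hPsplit, hKa']
  have hKσ : (0:ℝ) < K ^ σ := Real.rpow_pos_of_pos hK0 _
  have haσ : (0:ℝ) < (a:ℝ) ^ σ := Real.rpow_pos_of_pos ha0 _
  have hk1' : (0:ℝ) < (k:ℝ)+1 := by linarith
  field_simp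
  ring

lemma renormConst_eq (d k : ℕ) (σ m n₀ : ℝ) (n : Fin k → ℝ) (α : ℝ) (N : ℕ) :
    renormConst d k σ m n₀ n α N =
      ∑ l ∈ Fintype.piFinset (fun _ : Fin k => freqBox d N), rterm d k σ m n₀ n α l := rfl


noncomputable def Cterm (d k : ℕ) (σ m n₀ : ℝ) (n : Fin k → ℝ) (α : ℝ) : ℝ :=
  (Real.sqrt (5*d)*k) ^ (-|α + n₀|) *
    (∏ i, (Real.sqrt (5*d)*k) ^ (-|α + n i + 2*m - σ|)) /
    ((k+1) * (Real.sqrt (5*d)*k) ^ σ)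

lemma Cterm_pos (d k : ℕ) (hd : 1 ≤ d) (hk : 1 ≤ k) (σ m n₀ : ℝ) (n : Fin k → ℝ) (α : ℝ) :
    0 < Cterm d k σ m n₀ n α := by
  have h5 : (0:ℝ) < Real.sqrt (5*d) := Real.sqrt_pos.mpr (by positivity)
  have hk0 : (0:ℝ) < (k:ℝ) := by exact_mod_cast hk
  have hK : (0:ℝ) < Real.sqrt (5*d)*k := by positivity
  unfold Cterm
  apply div_pos
  · exact mul_pos (Real.rpow_pos_of_pos hK _)
      (Finset.prod_pos fun i _ => Real.rpow_pos_of_pos hK _)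
  · exact mul_pos (by positivity) (Real.rpow_pos_of_pos hK _)

lemma shell_sum_ge (d k : ℕ) (hd : 1 ≤ d) (hk : 1 ≤ k) (σ m n₀ : ℝ) (hσ : 0 ≤ σ)
    (n : Fin k → ℝ) (α : ℝ) (δ : ℝ)
    (hδ : δ = n₀ + α - σ + ∑ i, (2 * m + n i + α + d - σ)) (a : ℕ) (ha : 1 ≤ a) :
    Cterm d k σ m n₀ n α * (a:ℝ) ^ δ ≤
      ∑ l ∈ Fintype.piFinset (fun _ : Fin k => shellBox d a), rterm d k σ m n₀ n α l := by
  have ha0 : (0:ℝ) < (a:ℝ) := by exact_mod_cast ha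
  have hX : α + n₀ - σ + ∑ i, (α + n i + 2*m - σ) = δ - d*k := by
    rw [hδ]
    have : ∑ i, (2*m + n i + α + (d:ℝ) - σ) = (∑ i, (α + n i + 2*m - σ)) + k*d := by
      rw [show (fun i => 2*m + n i + α + (d:ℝ) - σ) = fun i => (α + n i + 2*m - σ) + d from
        funext fun i => by ring]
      rw [Finset.sum_add_distrib, Finset.sum_const, Finset.card_univ, Fintype.card_fin]
      push_cast; ring
    rw [this]; push_cast; ring
  have hcard : (Fintype.piFinset (fun _ : Fin k => shellBox d a)).card = (a ^ d) ^ k := by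
    rw [Fintype.card_piFinset]
    simp [card_shellBox]
  have hterm : ∀ l ∈ Fintype.piFinset (fun _ : Fin k => shellBox d a),
      Cterm d k σ m n₀ n α * (a:ℝ) ^ (δ - d*k) ≤ rterm d k σ m n₀ n α l := by
    intro l hl
    have hl' : ∀ i, l i ∈ shellBox d a := by
      intro i; exact Fintype.mem_piFinset.mp hl i
    have := shell_term_lb d k hd hk σ m n₀ hσ n α a ha l hl'
    rwa [hX] at this
  have hsum := Finset.card_nsmul_le_sum _ _ _ hterm
  rw [hcard] at hsum
  refine le_trans (le_of_eq ?_) hsum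
  rw [nsmul_eq_mul]
  push_cast
  have h1 : ((a:ℝ) ^ d) ^ k = (a:ℝ) ^ (((d*k : ℕ)):ℝ) := by
    rw [Real.rpow_natCast, pow_mul]
  rw [h1, ← mul_assoc, mul_comm ((a:ℝ) ^ (((d*k:ℕ)):ℝ)) (Cterm d k σ m n₀ n α), mul_assoc,
    ← Real.rpow_add ha0]
  congr 1
  push_cast
  ring

lemma renormConst_ge_sum (d k : ℕ) (σ m n₀ : ℝ) (n : Fin k → ℝ) (α : ℝ) (N : ℕ)
    (S : Finset (Fin k → Fin d → ℤ)) (hS : S ⊆ Fintype.piFinset (fun _ : Fin k => freqBox d N)) :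
    ∑ l ∈ S, rterm d k σ m n₀ n α l ≤ renormConst d k σ m n₀ n α N := by
  rw [renormConst_eq]
  exact Finset.sum_le_sum_of_subset_of_nonneg hS fun l _ _ => rterm_nonneg d k σ m n₀ n α l

lemma shellPi_subset (d k a N : ℕ) (hd : 1 ≤ d) (ha : 1 ≤ a) (hN : 4 * a ^ 2 * d ≤ N ^ 2) :
    Fintype.piFinset (fun _ : Fin k => shellBox d a) ⊆
      Fintype.piFinset (fun _ : Fin k => freqBox d N) := by
  intro l hl
  rw [Fintype.mem_piFinset] at hl ⊢
  intro i
  exact shellBox_subset d a N ha hN hd (hl i)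

lemma renormConst_ge_shell (d k : ℕ) (hd : 1 ≤ d) (hk : 1 ≤ k) (σ m n₀ : ℝ) (hσ : 0 ≤ σ)
    (n : Fin k → ℝ) (α : ℝ) (δ : ℝ)
    (hδ : δ = n₀ + α - σ + ∑ i, (2 * m + n i + α + d - σ)) (a N : ℕ) (ha : 1 ≤ a)
    (hN : 4 * a ^ 2 * d ≤ N ^ 2) :
    Cterm d k σ m n₀ n α * (a:ℝ) ^ δ ≤ renormConst d k σ m n₀ n α N :=
  le_trans (shell_sum_ge d k hd hk σ m n₀ hσ n α δ hδ a ha)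
    (renormConst_ge_sum d k σ m n₀ n α N _ (shellPi_subset d k a N hd ha hN))

lemma renormConst_ge_base (d k : ℕ) (hk : 1 ≤ k) (σ m n₀ : ℝ) (hσ : 0 ≤ σ)
    (n : Fin k → ℝ) (α : ℝ) (N : ℕ) (hN : 1 ≤ N) :
    1 / ((k:ℝ) + 1) ≤ renormConst d k σ m n₀ n α N := by
  rw [renormConst_eq]
  have h0 : (0 : Fin k → Fin d → ℤ) ∈ Fintype.piFinset (fun _ : Fin k => freqBox d N) := by
    rw [Fintype.mem_piFinset]; intro i; exact zero_mem_freqBox d N hN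
  have := Finset.single_le_sum (f := rterm d k σ m n₀ n α)
    (fun l _ => rterm_nonneg d k σ m n₀ n α l) h0
  rwa [rterm_zero] at this

lemma renormConst_ge_dyadic (d k : ℕ) (hd : 1 ≤ d) (hk : 1 ≤ k) (σ m n₀ : ℝ) (hσ : 0 ≤ σ)
    (n : Fin k → ℝ) (α : ℝ) (δ : ℝ)
    (hδ : δ = n₀ + α - σ + ∑ i, (2 * m + n i + α + d - σ)) (hδ0 : δ = 0)
    (N : ℕ) (hN : 4 * d ≤ N) :
    ((Nat.log 2 (N / (4 * d)) : ℝ) + 1) * Cterm d k σ m n₀ n α ≤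
      renormConst d k σ m n₀ n α N := by
  set J := Nat.log 2 (N / (4 * d)) with hJ
  set T : ℕ → Finset (Fin k → Fin d → ℤ) :=
    fun j => Fintype.piFinset (fun _ : Fin k => shellBox d (2 ^ j)) with hT
  have h4d : 0 < 4 * d := by positivity
  have hJmul : 2 ^ J * (4 * d) ≤ N := by
    have h1 : N / (4 * d) ≠ 0 := by
      have : 1 ≤ N / (4 * d) := (Nat.one_le_div_iff h4d).mpr hN
      omega
    exact (Nat.le_div_iff_mul_le h4d).mp (Nat.pow_log_le_self 2 h1)
  have hcond : ∀ j ≤ J, 4 * (2 ^ j) ^ 2 * d ≤ N ^ 2 := by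
    intro j hj
    have h1 : (2:ℕ) ^ j ≤ 2 ^ J := Nat.pow_le_pow_right (by norm_num) hj
    have h2 : 4 * d * 2 ^ j ≤ N := by
      calc 4 * d * 2 ^ j ≤ 2 ^ J * (4 * d) := by
            rw [mul_comm (4*d) (2^j)]; exact Nat.mul_le_mul_right _ h1
        _ ≤ N := hJmul
    have h3 : (2:ℕ) ^ j ≤ N := by
      calc (2:ℕ) ^ j ≤ 4 * d * 2 ^ j := Nat.le_mul_of_pos_left _ h4d
        _ ≤ N := h2
    calc 4 * (2 ^ j) ^ 2 * d = (4 * d * 2 ^ j) * 2 ^ j := by ring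
      _ ≤ N * N := Nat.mul_le_mul h2 h3
      _ = N ^ 2 := (sq N).symm
  have hdisj' : ∀ i j : ℕ, i < j → Disjoint (T i) (T j) := by
    intro i j hij
    rw [Finset.disjoint_left]
    intro l hli hlj
    have i0 : Fin k := ⟨0, hk⟩
    have r0 : Fin d := ⟨0, hd⟩
    have h1 := (mem_shellBox.mp (Fintype.mem_piFinset.mp hli i0) r0).2
    have h2 := (mem_shellBox.mp (Fintype.mem_piFinset.mp hlj i0) r0).1
    have hp : (2:ℕ) ^ (i+1) ≤ 2 ^ j := Nat.pow_le_pow_right (by norm_num) hij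
    have hp' : (2:ℤ) * (2:ℤ) ^ i ≤ (2:ℤ) ^ j := by
      have h : ((2:ℕ) ^ (i+1) : ℤ) ≤ ((2:ℕ) ^ j : ℤ) := by exact_mod_cast hp
      push_cast at h
      calc (2:ℤ) * (2:ℤ) ^ i = 2 ^ (i+1) := by ring
        _ ≤ 2 ^ j := h
    push_cast at h1 h2
    linarith [h1, h2, hp']
  have hdisj : (↑(Finset.range (J + 1)) : Set ℕ).PairwiseDisjoint T := by
    intro i _ j _ hij
    rcases lt_or_gt_of_ne hij with h | h
    · exact hdisj' i j h
    · exact (hdisj' j i h).symm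
  have heach : ∀ j ∈ Finset.range (J + 1),
      Cterm d k σ m n₀ n α ≤ ∑ l ∈ T j, rterm d k σ m n₀ n α l := by
    intro j _
    have := shell_sum_ge d k hd hk σ m n₀ hσ n α δ hδ (2 ^ j) (Nat.one_le_two_pow)
    rwa [hδ0, Real.rpow_zero, mul_one] at this
  have hbig : ((J:ℝ) + 1) * Cterm d k σ m n₀ n α ≤
      ∑ l ∈ (Finset.range (J + 1)).biUnion T, rterm d k σ m n₀ n α l := by
    rw [Finset.sum_biUnion hdisj]
    calc ((J:ℝ) + 1) * Cterm d k σ m n₀ n α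
        = ∑ _j ∈ Finset.range (J + 1), Cterm d k σ m n₀ n α := by
          rw [Finset.sum_const, Finset.card_range, nsmul_eq_mul]; push_cast; ring
      _ ≤ ∑ j ∈ Finset.range (J + 1), ∑ l ∈ T j, rterm d k σ m n₀ n α l :=
          Finset.sum_le_sum heach
  refine le_trans hbig (renormConst_ge_sum d k σ m n₀ n α N _ ?_)
  apply Finset.biUnion_subset.mpr
  intro j hj
  exact shellPi_subset d k (2 ^ j) N hd Nat.one_le_two_pow
    (hcond j (Nat.lt_succ_iff.mp (Finset.mem_range.mp hj)))

lemma nat_lt_div_succ_mul (N b : ℕ) (hb : 0 < b) : N < (N / b + 1) * b := by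
  calc N = b * (N / b) + N % b := (Nat.div_add_mod N b).symm
    _ < b * (N / b) + b := Nat.add_lt_add_left (Nat.mod_lt N hb) _
    _ = (N / b + 1) * b := by ring

set_option maxHeartbeats 1000000 in
/-- Divergence of the renormalisation constant: under Assumptions 1 and 2, `c_N ≳ N^{δ(α)}`
when `δ(α) > 0` and `c_N ≳ log N` when `δ(α) = 0`, where
`δ(α) = n₀ + α - σ + ∑ᵢ (2m + nᵢ + α + d - σ)`. -/
theorem renormConst_divergence (d k : ℕ) (hd : 1 ≤ d) (hk : 1 ≤ k)
    (σ m n₀ : ℝ) (hσ : 0 ≤ σ) (n : Fin k → ℝ)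
    (hassum1 : ∀ i, (σ - d) / 2 - m - n i < 0)
    (A : ℝ) (hA : A = (1 / 2) * ∑ i, (σ - d - 2 * m - 2 * n i))
    (hassum2a : 0 < A + ((d : ℝ) + σ) / 2)
    (hassum2b : n₀ - m < A + ((d : ℝ) + σ) / 2)
    (α : ℝ) (δ : ℝ) (hδ : δ = n₀ + α - σ + ∑ i, (2 * m + n i + α + d - σ)) :
    (0 < δ → ∃ c : ℝ, 0 < c ∧ ∀ N : ℕ, 1 ≤ N →
        c * (N : ℝ) ^ δ ≤ renormConst d k σ m n₀ n α N) ∧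
    (δ = 0 → ∃ c : ℝ, 0 < c ∧ ∀ N : ℕ, 1 ≤ N →
        c * Real.log N ≤ renormConst d k σ m n₀ n α N) := by
  have hC := Cterm_pos d k hd hk σ m n₀ n α
  set C := Cterm d k σ m n₀ n α with hCdef
  have hk1 : (0:ℝ) < (k:ℝ) + 1 := by positivity
  have hd1 : (1:ℝ) ≤ (d:ℝ) := by exact_mod_cast hd
  constructor
  · -- δ > 0
    intro hδpos
    set B : ℝ := 4 * (d:ℝ) + 4 with hB
    have hBpos : (0:ℝ) < B := by rw [hB]; linarith
    have hBδ : (0:ℝ) < B ^ (-δ) := Real.rpow_pos_of_pos hBpos _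
    refine ⟨min (C * B ^ (-δ)) (1 / ((k:ℝ) + 1) * B ^ (-δ)), lt_min (by positivity) (by positivity), ?_⟩
    intro N hN1
    have hN0 : (0:ℝ) ≤ (N:ℝ) := by positivity
    rcases le_or_gt (4 * (d + 1)) N with hbig | hsmall
    · -- large N: one shell at a ≈ N / (2(d+1))
      set a := N / (2 * (d + 1)) with hadef
      have hb0 : 0 < 2 * (d + 1) := by positivity
      have ha1 : 1 ≤ a := (Nat.one_le_div_iff hb0).mpr (by omega)
      have hmul : a * (2 * (d + 1)) ≤ N := Nat.div_mul_le_self N _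
      have hcond : 4 * a ^ 2 * d ≤ N ^ 2 := by
        have hd2 : d ≤ (d + 1) * (d + 1) := by nlinarith
        calc 4 * a ^ 2 * d ≤ 4 * a ^ 2 * ((d + 1) * (d + 1)) :=
              Nat.mul_le_mul_left _ hd2
          _ = (a * (2 * (d + 1))) * (a * (2 * (d + 1))) := by ring
          _ ≤ N * N := Nat.mul_le_mul hmul hmul
          _ = N ^ 2 := (sq N).symm
      have hshell := renormConst_ge_shell d k hd hk σ m n₀ hσ n α δ hδ a N ha1 hcond
      have hlt : N < (a + 1) * (2 * (d + 1)) := nat_lt_div_succ_mul N _ hb0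
      have haR : (N:ℝ) / B ≤ (a:ℝ) := by
        rw [div_le_iff₀ hBpos]
        have hltR : (N:ℝ) < ((a:ℝ) + 1) * (2 * ((d:ℝ) + 1)) := by exact_mod_cast hlt
        have hbigR : 4 * ((d:ℝ) + 1) ≤ (N:ℝ) := by exact_mod_cast hbig
        rw [hB]
        nlinarith
      have hNB : (N:ℝ) ^ δ * B ^ (-δ) ≤ (a:ℝ) ^ δ := by
        have h1 : ((N:ℝ) / B) ^ δ ≤ (a:ℝ) ^ δ :=
          Real.rpow_le_rpow (by positivity) haR hδpos.le
        have h2 : ((N:ℝ) / B) ^ δ = (N:ℝ) ^ δ * B ^ (-δ) := by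
          rw [Real.div_rpow hN0 hBpos.le, Real.rpow_neg hBpos.le, div_eq_mul_inv]
        linarith [h2 ▸ h1]
      calc min (C * B ^ (-δ)) (1 / ((k:ℝ) + 1) * B ^ (-δ)) * (N:ℝ) ^ δ
          ≤ C * B ^ (-δ) * (N:ℝ) ^ δ := by
            apply mul_le_mul_of_nonneg_right (min_le_left _ _) (by positivity)
        _ = C * ((N:ℝ) ^ δ * B ^ (-δ)) := by ring
        _ ≤ C * (a:ℝ) ^ δ := mul_le_mul_of_nonneg_left hNB hC.le
        _ ≤ renormConst d k σ m n₀ n α N := hshell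
    · -- small N
      have hNB : (N:ℝ) ≤ B := by
        rw [hB]
        have : (N:ℝ) < 4 * ((d:ℝ) + 1) := by exact_mod_cast hsmall
        linarith
      have h1 : (N:ℝ) ^ δ ≤ B ^ δ := Real.rpow_le_rpow hN0 hNB hδpos.le
      have h2 : B ^ (-δ) * B ^ δ = 1 := by
        rw [Real.rpow_neg hBpos.le]
        exact inv_mul_cancel₀ (ne_of_gt (Real.rpow_pos_of_pos hBpos _))
      calc min (C * B ^ (-δ)) (1 / ((k:ℝ) + 1) * B ^ (-δ)) * (N:ℝ) ^ δ
          ≤ 1 / ((k:ℝ) + 1) * B ^ (-δ) * (N:ℝ) ^ δ := by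
            apply mul_le_mul_of_nonneg_right (min_le_right _ _) (by positivity)
        _ ≤ 1 / ((k:ℝ) + 1) * B ^ (-δ) * B ^ δ := by
            apply mul_le_mul_of_nonneg_left h1 (by positivity)
        _ = 1 / ((k:ℝ) + 1) := by rw [mul_assoc, h2, mul_one]
        _ ≤ renormConst d k σ m n₀ n α N := renormConst_ge_base d k hk σ m n₀ hσ n α N hN1
  · -- δ = 0
    intro hδ0
    have hlog2 : (0:ℝ) < Real.log 2 := Real.log_pos one_lt_two
    set M : ℕ := 64 * d ^ 2 with hM
    have hM1 : 1 < M := by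
      have h2 : 1 ≤ d ^ 2 := Nat.one_le_pow _ _ hd
      rw [hM]; nlinarith
    have hlogM : (0:ℝ) < Real.log M := Real.log_pos (by exact_mod_cast hM1)
    refine ⟨min (C / (2 * Real.log 2)) (1 / ((k:ℝ) + 1) / Real.log M),
      lt_min (by positivity) (by positivity), ?_⟩
    intro N hN1
    have hN0 : (0:ℝ) < (N:ℝ) := by exact_mod_cast hN1
    have hlogN0 : (0:ℝ) ≤ Real.log N := Real.log_nonneg (by exact_mod_cast hN1)
    rcases le_or_gt M N with hbig | hsmall
    · -- large N : dyadic shells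
      have hddle : d ≤ d * d := Nat.le_mul_of_pos_left d hd
      have hbig' : 64 * d ^ 2 ≤ N := by have h := hbig; rwa [hM] at h
      have h4d : 4 * d ≤ N := by nlinarith [hddle, hbig']
      have hdy := renormConst_ge_dyadic d k hd hk σ m n₀ hσ n α δ hδ hδ0 N h4d
      set J := Nat.log 2 (N / (4 * d)) with hJ
      have h4d0 : 0 < 4 * d := by positivity
      set x : ℕ := N / (4 * d) with hx
      have hx1 : 1 ≤ x := (Nat.one_le_div_iff h4d0).mpr h4d
      have hxR0 : (0:ℝ) < (x:ℝ) := by exact_mod_cast hx1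
      have h8d : (0:ℝ) < 8 * (d:ℝ) := by linarith
      have hxlb : (N:ℝ) / (8 * (d:ℝ)) ≤ (x:ℝ) := by
        have hlt : N < (x + 1) * (4 * d) := nat_lt_div_succ_mul N _ h4d0
        have hltR : (N:ℝ) < ((x:ℝ) + 1) * (4 * (d:ℝ)) := by exact_mod_cast hlt
        have h8dN : 8 * (d:ℝ) ≤ (N:ℝ) := by
          have : 8 * d ≤ N := by nlinarith [hddle, hbig']
          exact_mod_cast this
        rw [div_le_iff₀ h8d]
        nlinarith
      have hxub' : x < 2 ^ (J + 1) := by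
        have h := Nat.lt_pow_succ_log_self (by norm_num : 1 < 2) x
        simpa [hJ, Nat.succ_eq_add_one] using h
      have hxub : (x:ℝ) < 2 ^ (J + 1) := by exact_mod_cast hxub'
      -- log N / 2 ≤ log x
      have hlogx : Real.log N / 2 ≤ Real.log x := by
        have h1 : Real.log ((N:ℝ) / (8 * (d:ℝ))) ≤ Real.log x :=
          Real.log_le_log (by positivity) hxlb
        have h2 : Real.log ((N:ℝ) / (8 * (d:ℝ))) = Real.log N - Real.log (8 * (d:ℝ)) :=
          Real.log_div (ne_of_gt hN0) (ne_of_gt h8d)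
        have h3 : 2 * Real.log (8 * (d:ℝ)) ≤ Real.log N := by
          have h4 : (8 * (d:ℝ)) ^ (2:ℕ) ≤ (N:ℝ) := by
            have : ((M:ℕ):ℝ) ≤ (N:ℝ) := by exact_mod_cast hbig
            rw [hM] at this
            push_cast at this
            nlinarith
          have h5 := Real.log_le_log (by positivity) h4
          rwa [Real.log_pow] at h5
        linarith
      -- log x < (J+1) log 2
      have hlogxu : Real.log x < ((J:ℝ) + 1) * Real.log 2 := by
        have h1 : Real.log (x:ℝ) < Real.log ((2:ℝ) ^ (J + 1)) := Real.log_lt_log hxR0 hxub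
        rwa [Real.log_pow, Nat.cast_add, Nat.cast_one] at h1
      have hkey : Real.log N / (2 * Real.log 2) ≤ (J:ℝ) + 1 := by
        rw [div_le_iff₀ (by positivity)]
        nlinarith
      calc min (C / (2 * Real.log 2)) (1 / ((k:ℝ) + 1) / Real.log M) * Real.log N
          ≤ C / (2 * Real.log 2) * Real.log N := by
            apply mul_le_mul_of_nonneg_right (min_le_left _ _) hlogN0
        _ = C * (Real.log N / (2 * Real.log 2)) := by ring
        _ ≤ C * ((J:ℝ) + 1) := mul_le_mul_of_nonneg_left hkey hC.le
        _ = ((J:ℝ) + 1) * C := by ring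
        _ ≤ renormConst d k σ m n₀ n α N := hdy
    · -- small N
      have hlogNM : Real.log N ≤ Real.log M :=
        Real.log_le_log hN0 (by exact_mod_cast hsmall.le)
      calc min (C / (2 * Real.log 2)) (1 / ((k:ℝ) + 1) / Real.log M) * Real.log N
          ≤ 1 / ((k:ℝ) + 1) / Real.log M * Real.log N := by
            apply mul_le_mul_of_nonneg_right (min_le_right _ _) hlogN0
        _ ≤ 1 / ((k:ℝ) + 1) / Real.log M * Real.log M := by
            apply mul_le_mul_of_nonneg_left hlogNM (by positivity)
        _ = 1 / ((k:ℝ) + 1) := by field_simp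
        _ ≤ renormConst d k σ m n₀ n α N := renormConst_ge_base d k hk σ m n₀ hσ n α N hN1
end
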